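/- arXiv:2106.10723 — 10 statements merged into one kernel-verified Lean document; each statement's English description precedes it below -/
import Mathlib

section
/- For every real y > 0, the map λ ↦ T(y,λ) is differentiable at every λ ∈ ℝ, its derivative at λ equals D(y,λ), and D(y,λ) ≥ 0 for all λ ∈ ℝ (so λ ↦ T(y,λ) is monotone nondecreasing). -/
/-- The Box–Cox transformation `T(y, λ)`. -/
noncomputable def boxCox (y lam : ℝ) : ℝ :=
  if lam = 0 then Real.log y else (y ^ lam - 1) / lam

/-- `D(y, λ)`, the derivative of the Box–Cox transformation in `λ`. -/
noncomputable def boxCoxDeriv (y lam : ℝ) : ℝ :=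
  if lam = 0 then (1 / 2) * Real.log y ^ 2
  else (lam ^ 2)⁻¹ * (y ^ lam * (lam * Real.log y - 1) + 1)

open Real Filter

private lemma boxCox_taylor2 (x : ℝ) (hx : |x| ≤ 1) :
    |Real.exp x - 1 - x - x^2/2| ≤ (2/9) * |x|^3 := by
  have h := Real.exp_bound hx (n := 3) (by norm_num)
  have hs : ∑ m ∈ Finset.range 3, x ^ m / m.factorial = 1 + x + x^2/2 := by
    norm_num [Finset.sum_range_succ, Nat.factorial]
  rw [hs] at h
  calc |Real.exp x - 1 - x - x^2/2| = |Real.exp x - (1 + x + x^2/2)| := by ring_nf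
    _ ≤ |x|^3 * ((3:ℕ).succ / ((3:ℕ).factorial * 3)) := h
    _ = |x|^3 * (2/9) := by norm_num [Nat.factorial]
    _ = (2/9) * |x|^3 := mul_comm _ _

private lemma boxCox_hasDerivAt_ne (y : ℝ) (hy : 0 < y) (lam : ℝ) (h : lam ≠ 0) :
    HasDerivAt (fun l : ℝ => boxCox y l)
      ((lam ^ 2)⁻¹ * (y ^ lam * (lam * Real.log y - 1) + 1)) lam := by
  set c := Real.log y with hc
  have hrpow : ∀ l : ℝ, y ^ l = Real.exp (l * c) := fun l => by
    rw [Real.rpow_def_of_pos hy, mul_comm]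
  have h1 : HasDerivAt (fun l : ℝ => Real.exp (l * c)) (Real.exp (lam * c) * c) lam := by
    simpa [Function.comp_def] using (Real.hasDerivAt_exp (lam * c)).comp lam ((hasDerivAt_id lam).mul_const c)
  have h2 : HasDerivAt (fun l : ℝ => (Real.exp (l * c) - 1) / l)
      (((Real.exp (lam * c) * c) * lam - (Real.exp (lam * c) - 1) * 1) / lam ^ 2) lam :=
    (h1.sub_const 1).div (hasDerivAt_id lam) h
  have heq : (fun l : ℝ => boxCox y l)
      =ᶠ[nhds lam] (fun l : ℝ => (Real.exp (l * c) - 1) / l) := by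
    filter_upwards [isOpen_compl_singleton.mem_nhds h] with l hl
    simp only [Set.mem_compl_iff, Set.mem_singleton_iff] at hl
    rw [boxCox, if_neg hl, hrpow l]
  have := h2.congr_of_eventuallyEq heq
  refine this.congr_deriv ?_
  rw [hrpow lam]
  field_simp
  ring

private lemma boxCox_hasDerivAt_zero (y : ℝ) (hy : 0 < y) :
    HasDerivAt (fun l : ℝ => boxCox y l) ((1/2) * Real.log y ^ 2) 0 := by
  set c := Real.log y with hc
  have hrpow : ∀ l : ℝ, y ^ l = Real.exp (l * c) := fun l => by
    rw [Real.rpow_def_of_pos hy, mul_comm]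
  rw [hasDerivAt_iff_tendsto_slope]
  set f : ℝ → ℝ := fun l => boxCox y l
  have hbound : ∀ᶠ l in nhdsWithin (0:ℝ) {(0:ℝ)}ᶜ,
      |slope f 0 l - (1/2) * c ^ 2| ≤ (2/9) * |c|^3 * |l| := by
    have hδ : (0:ℝ) < min 1 (1/(|c|+1)) := by positivity
    filter_upwards [nhdsWithin_le_nhds (Metric.ball_mem_nhds (0:ℝ) hδ),
      self_mem_nhdsWithin] with l hball hl
    simp only [Set.mem_compl_iff, Set.mem_singleton_iff] at hl
    simp only [Metric.mem_ball, Real.dist_eq, sub_zero] at hball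
    have hl1 : |l| ≤ 1 := le_of_lt (lt_of_lt_of_le hball (min_le_left _ _))
    have hlc : |l * c| ≤ 1 := by
      rw [abs_mul]
      have h2 : |l| < 1/(|c|+1) := lt_of_lt_of_le hball (min_le_right _ _)
      have hcpos : (0:ℝ) < |c| + 1 := by positivity
      calc |l| * |c| ≤ (1/(|c|+1)) * |c| := by
            apply mul_le_mul_of_nonneg_right h2.le (abs_nonneg c)
        _ ≤ 1 := by rw [div_mul_eq_mul_div, one_mul, div_le_one hcpos]; linarith
    have hT := boxCox_taylor2 (l * c) hlc
    have hslope : slope f 0 l = (Real.exp (l * c) - 1 - l * c) / l ^ 2 := by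
      rw [slope_def_field]
      simp only [f, boxCox, if_neg hl, if_pos rfl, hrpow l]
      rw [sub_zero, div_eq_div_iff hl (pow_ne_zero 2 hl)]
      field_simp
      ring
    rw [hslope]
    have hl2 : (0:ℝ) < l ^ 2 := by positivity
    have : (Real.exp (l * c) - 1 - l * c) / l ^ 2 - (1/2) * c ^ 2
        = (Real.exp (l * c) - 1 - (l*c) - (l*c)^2/2) / l ^ 2 := by
      field_simp
    rw [this, abs_div, abs_of_pos hl2, div_le_iff₀ hl2]
    calc |Real.exp (l * c) - 1 - (l*c) - (l*c)^2/2| ≤ (2/9) * |l*c|^3 := hT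
      _ = (2/9) * |c|^3 * |l| * l^2 := by
          rw [abs_mul, mul_pow, ← sq_abs l]; ring
  have hlim : Tendsto (fun l : ℝ => (2/9) * |c|^3 * |l|) (nhdsWithin (0:ℝ) {(0:ℝ)}ᶜ)
      (nhds 0) := by
    have : Tendsto (fun l : ℝ => (2/9) * |c|^3 * |l|) (nhds (0:ℝ))
        (nhds ((2/9) * |c|^3 * |(0:ℝ)|)) := (continuous_const.mul continuous_abs).tendsto 0
    simpa using this.mono_left nhdsWithin_le_nhds
  rw [tendsto_iff_norm_sub_tendsto_zero]
  apply squeeze_zero' (.of_forall fun l => norm_nonneg _) _ hlim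
  simpa only [Real.norm_eq_abs] using hbound

private lemma boxCox_exp_ineq (t : ℝ) : 0 ≤ Real.exp t * (t - 1) + 1 := by
  have h := Real.add_one_le_exp (-t)
  have h2 : Real.exp (-t) = (Real.exp t)⁻¹ := Real.exp_neg t
  have h3 : (0:ℝ) < Real.exp t := Real.exp_pos t
  have h4 : (Real.exp t)⁻¹ * Real.exp t = 1 := inv_mul_cancel₀ (ne_of_gt h3)
  rw [h2] at h
  nlinarith

/-- For every `y > 0`, `λ ↦ T(y, λ)` is differentiable everywhere with derivative
`D(y, λ)`, and `D(y, λ) ≥ 0`; consequently `λ ↦ T(y, λ)` is monotone nondecreasing. -/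
theorem boxCox_hasDerivAt_boxCoxDeriv_nonneg (y : ℝ) (hy : 0 < y) :
    (∀ lam : ℝ,
      HasDerivAt (fun l : ℝ => boxCox y l) (boxCoxDeriv y lam) lam ∧ 0 ≤ boxCoxDeriv y lam) ∧
    Monotone (fun l : ℝ => boxCox y l) := by
  have key : ∀ lam : ℝ,
      HasDerivAt (fun l : ℝ => boxCox y l) (boxCoxDeriv y lam) lam ∧ 0 ≤ boxCoxDeriv y lam := by
    intro lam
    by_cases h : lam = 0
    · subst h
      refine ⟨?_, ?_⟩
      · simpa [boxCoxDeriv] using boxCox_hasDerivAt_zero y hy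
      · rw [boxCoxDeriv, if_pos rfl]
        positivity
    · refine ⟨?_, ?_⟩
      · simpa [boxCoxDeriv, if_neg h] using boxCox_hasDerivAt_ne y hy lam h
      · rw [boxCoxDeriv, if_neg h]
        apply mul_nonneg (by positivity)
        have := boxCox_exp_ineq (lam * Real.log y)
        rw [Real.rpow_def_of_pos hy, mul_comm (Real.log y) lam]
        linarith
  refine ⟨key, ?_⟩
  have hdiff : Differentiable ℝ (fun l : ℝ => boxCox y l) :=
    fun lam => (key lam).1.differentiableAt
  apply monotone_of_deriv_nonneg hdiff
  intro lam
  rw [(key lam).1.deriv]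
  exact (key lam).2
end

section
/- For every real y > 0, the map λ ↦ D(y,λ) is differentiable at every λ ∈ ℝ with derivative D₂(y,λ) (so D₂(y,·) is the second derivative of the Box–Cox transformation λ ↦ T(y,λ)); moreover, for every λ ∈ ℝ: D₂(y,λ) > 0 if y > 1, D₂(y,λ) < 0 if 0 < y < 1, and D₂(1,λ) = 0. -/
open Real intervalIntegral MeasureTheory Set Metric

/-- `D₂(y, λ)`, the second derivative of the Box–Cox transformation `T(y, λ)` in `λ`. -/
noncomputable def boxCoxDeriv2 (y lam : ℝ) : ℝ :=
  if lam = 0 then (1 / 3) * Real.log y ^ 3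
  else (lam ^ 3)⁻¹ *
    (y ^ lam * lam ^ 2 * Real.log y ^ 2 - 2 * (y ^ lam * (lam * Real.log y - 1) + 1))

private lemma cont1 (lam : ℝ) : Continuous (fun t : ℝ => t * Real.exp (lam * t)) := by
  fun_prop

private lemma cont2 (lam : ℝ) : Continuous (fun t : ℝ => t ^ 2 * Real.exp (lam * t)) := by
  fun_prop

private lemma aux1 (L lam : ℝ) :
    ∫ t in (0:ℝ)..L, t * Real.exp (lam * t) =
      if lam = 0 then (1 / 2) * L ^ 2
      else (lam ^ 2)⁻¹ * (Real.exp (lam * L) * (lam * L - 1) + 1) := by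
  split_ifs with h
  · simp [h, integral_id]; ring
  · have : ∀ t ∈ Set.uIcc (0:ℝ) L,
        HasDerivAt (fun t => (lam ^ 2)⁻¹ * (Real.exp (lam * t) * (lam * t - 1)))
          (t * Real.exp (lam * t)) t := by
      intro t _
      have h1 : HasDerivAt (fun t : ℝ => Real.exp (lam * t)) (lam * Real.exp (lam * t)) t := by
        simpa [mul_comm] using ((hasDerivAt_id t).const_mul lam).exp
      have h2 : HasDerivAt (fun t : ℝ => lam * t - 1) lam t := by
        simpa using ((hasDerivAt_id t).const_mul lam).sub_const 1
      have := ((h1.mul h2).const_mul ((lam ^ 2)⁻¹))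
      refine this.congr_deriv ?_
      field_simp
      ring
    rw [intervalIntegral.integral_eq_sub_of_hasDerivAt this
      ((cont1 lam).intervalIntegrable _ _)]
    simp
    field_simp
    try ring

private lemma aux2 (L lam : ℝ) :
    ∫ t in (0:ℝ)..L, t ^ 2 * Real.exp (lam * t) =
      if lam = 0 then (1 / 3) * L ^ 3
      else (lam ^ 3)⁻¹ *
        (Real.exp (lam * L) * lam ^ 2 * L ^ 2 -
          2 * (Real.exp (lam * L) * (lam * L - 1) + 1)) := by
  split_ifs with h
  · simp [h, integral_pow]; ring
  · have : ∀ t ∈ Set.uIcc (0:ℝ) L,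
        HasDerivAt
          (fun t => (lam ^ 3)⁻¹ * (Real.exp (lam * t) * (lam ^ 2 * t ^ 2 - 2 * lam * t + 2)))
          (t ^ 2 * Real.exp (lam * t)) t := by
      intro t _
      have h1 : HasDerivAt (fun t : ℝ => Real.exp (lam * t)) (lam * Real.exp (lam * t)) t := by
        simpa [mul_comm] using ((hasDerivAt_id t).const_mul lam).exp
      have h2 : HasDerivAt (fun t : ℝ => lam ^ 2 * t ^ 2 - 2 * lam * t + 2)
          (lam ^ 2 * (2 * t) - 2 * lam) t := by
        have := (((hasDerivAt_pow 2 t).const_mul (lam ^ 2)).sub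
          ((hasDerivAt_id t).const_mul (2 * lam))).add_const 2
        simpa using this
      have := ((h1.mul h2).const_mul ((lam ^ 3)⁻¹))
      refine this.congr_deriv ?_
      field_simp
      ring
    rw [intervalIntegral.integral_eq_sub_of_hasDerivAt this
      ((cont2 lam).intervalIntegrable _ _)]
    simp
    field_simp
    try ring

private lemma D_eq (y : ℝ) (hy : 0 < y) (lam : ℝ) :
    boxCoxDeriv y lam = ∫ t in (0:ℝ)..Real.log y, t * Real.exp (lam * t) := by
  rw [aux1]
  unfold boxCoxDeriv
  split_ifs with h
  · rfl
  · rw [Real.rpow_def_of_pos hy, mul_comm (Real.log y) lam]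

private lemma D2_eq (y : ℝ) (hy : 0 < y) (lam : ℝ) :
    boxCoxDeriv2 y lam = ∫ t in (0:ℝ)..Real.log y, t ^ 2 * Real.exp (lam * t) := by
  rw [aux2]
  unfold boxCoxDeriv2
  split_ifs with h
  · rfl
  · rw [Real.rpow_def_of_pos hy, mul_comm (Real.log y) lam]

/-- For every `y > 0`, `λ ↦ D(y, λ)` is differentiable everywhere with derivative
`D₂(y, λ)`; moreover `D₂(y, λ) > 0` if `y > 1`, `D₂(y, λ) < 0` if `0 < y < 1`, and
`D₂(1, λ) = 0`. -/
theorem boxCoxDeriv_hasDerivAt_boxCoxDeriv2_sign (y : ℝ) (hy : 0 < y) (lam : ℝ) :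
    HasDerivAt (fun l : ℝ => boxCoxDeriv y l) (boxCoxDeriv2 y lam) lam ∧
    (1 < y → 0 < boxCoxDeriv2 y lam) ∧
    (y < 1 → boxCoxDeriv2 y lam < 0) ∧
    boxCoxDeriv2 1 lam = 0 := by
  set L := Real.log y with hL
  refine ⟨?_, ?_, ?_, ?_⟩
  · -- derivative
    have key := intervalIntegral.hasDerivAt_integral_of_dominated_loc_of_deriv_le
      (F := fun (x : ℝ) (t : ℝ) => t * Real.exp (x * t))
      (F' := fun (x : ℝ) (t : ℝ) => t ^ 2 * Real.exp (x * t))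
      (x₀ := lam) (a := (0:ℝ)) (b := L) (μ := volume)
      (bound := fun t => t ^ 2 * Real.exp ((|lam| + 1) * |t|))
      (s := Metric.ball lam 1) (Metric.ball_mem_nhds lam one_pos)
      (Filter.Eventually.of_forall fun x => ((cont1 x).aestronglyMeasurable))
      (((cont1 lam).intervalIntegrable _ _))
      ((cont2 lam).aestronglyMeasurable)
      ?_ ?_ ?_
    · have heq : (fun l : ℝ => boxCoxDeriv y l)
          = fun x : ℝ => ∫ t in (0:ℝ)..L, t * Real.exp (x * t) :=
        funext fun l => D_eq y hy l
      rw [heq, D2_eq y hy lam]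
      exact key.2
    · refine Filter.Eventually.of_forall fun t _ x hx => ?_
      have hxb : |x| ≤ |lam| + 1 := by
        have := abs_sub_abs_le_abs_sub x lam
        have h2 : |x - lam| < 1 := by simpa [Real.dist_eq] using hx
        linarith
      have hxt : x * t ≤ (|lam| + 1) * |t| := by
        calc x * t ≤ |x * t| := le_abs_self _
        _ = |x| * |t| := abs_mul x t
        _ ≤ (|lam| + 1) * |t| := by
            exact mul_le_mul_of_nonneg_right hxb (abs_nonneg t)
      have : Real.exp (x * t) ≤ Real.exp ((|lam| + 1) * |t|) := Real.exp_le_exp.2 hxt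
      have ht2 : (0:ℝ) ≤ t ^ 2 := sq_nonneg t
      rw [Real.norm_eq_abs, abs_mul, abs_pow, sq_abs, abs_of_pos (Real.exp_pos _)]
      exact mul_le_mul_of_nonneg_left this ht2
    · exact (Continuous.intervalIntegrable (by fun_prop) _ _)
    · refine Filter.Eventually.of_forall fun t _ x _ => ?_
      have h1 : HasDerivAt (fun x : ℝ => Real.exp (x * t)) (t * Real.exp (x * t)) x := by
        simpa [mul_comm] using ((hasDerivAt_id x).mul_const t).exp
      have := h1.const_mul t
      refine this.congr_deriv ?_
      ring
  · intro h1y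
    have hLpos : 0 < L := Real.log_pos h1y
    rw [D2_eq y hy lam]
    refine intervalIntegral_pos_of_pos_on ((cont2 lam).intervalIntegrable _ _) ?_ hLpos
    intro t ht
    exact mul_pos (pow_pos ht.1 2) (Real.exp_pos _)
  · intro h1y
    have hLneg : L < 0 := Real.log_neg hy h1y
    rw [D2_eq y hy lam, intervalIntegral.integral_symm]
    have : 0 < ∫ t in L..(0:ℝ), t ^ 2 * Real.exp (lam * t) := by
      refine intervalIntegral_pos_of_pos_on ((cont2 lam).intervalIntegrable _ _) ?_ hLneg
      intro t ht
      have : t < 0 := ht.2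
      exact mul_pos (by nlinarith) (Real.exp_pos _)
    linarith
  · simp [boxCoxDeriv2, Real.log_one]
end

section
/- Let A₁ and A₂ be real symmetric positive definite n×n matrices, and let Aᵢ^{−1/2} denote the inverse of the unique positive definite square root of Aᵢ. Then ‖A₂^{−1/2} − A₁^{−1/2}‖_Sp ≤ (1/2) · ( max(‖A₁^{−1}‖_Sp, ‖A₂^{−1}‖_Sp) )^{3/2} · ‖A₂ − A₁‖_Sp. -/
open Matrix

/-- The spectral norm (ℓ²→ℓ² operator norm) of a real matrix. -/
noncomputable def spNorm {n m : ℕ} (A : Matrix (Fin n) (Fin m) ℝ) : ℝ :=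
  ‖LinearMap.toContinuousLinearMap (Matrix.toEuclideanLin A)‖

/-- The square root of a positive semidefinite matrix, as defined in Mathlib (December 2024),
where it has since been removed. -/
noncomputable def Matrix.PosSemidef.sqrt {n : Type*} [Fintype n] [DecidableEq n]
    {𝕜 : Type*} [RCLike 𝕜] [PartialOrder 𝕜] {A : Matrix n n 𝕜} (hA : A.PosSemidef) : Matrix n n 𝕜 :=
  hA.1.eigenvectorUnitary.1 * diagonal ((↑) ∘ (√·) ∘ hA.1.eigenvalues) *
    (star hA.1.eigenvectorUnitary : Matrix n n 𝕜)

lemma Matrix.PosSemidef.sqrt_mul_self {m : Type*} [Fintype m] [DecidableEq m]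
    {A : Matrix m m ℝ} (hA : A.PosSemidef) : hA.sqrt * hA.sqrt = A := by
  unfold Matrix.PosSemidef.sqrt
  conv_rhs => rw [hA.1.spectral_theorem, Unitary.conjStarAlgAut_apply]
  have hUU := Unitary.coe_star_mul_self hA.1.eigenvectorUnitary
  simp only [Matrix.mul_assoc]
  rw [← Matrix.mul_assoc (star _ : Matrix m m ℝ) ((hA.1.eigenvectorUnitary : Matrix m m ℝ)), hUU,
    Matrix.one_mul, ← Matrix.mul_assoc (diagonal _), diagonal_mul_diagonal]
  congr 3
  funext i
  simp [Real.mul_self_sqrt (hA.eigenvalues_nonneg i)]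

lemma Matrix.PosSemidef.posSemidef_sqrt {m : Type*} [Fintype m] [DecidableEq m]
    {A : Matrix m m ℝ} (hA : A.PosSemidef) : hA.sqrt.PosSemidef := by
  unfold Matrix.PosSemidef.sqrt
  have h := (posSemidef_diagonal_iff (d := ((↑) ∘ (√·) ∘ hA.1.eigenvalues : m → ℝ))).2
    (fun i => by simp [Real.sqrt_nonneg])
  convert h.mul_mul_conjTranspose_same (hA.1.eigenvectorUnitary : Matrix m m ℝ) using 1
  rw [star_eq_conjTranspose]
  rfl

namespace SpNormAux

open scoped Matrix.Norms.L2Operator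

variable {n : ℕ}

lemma spNorm_eq (A : Matrix (Fin n) (Fin n) ℝ) : spNorm A = ‖A‖ := rfl

lemma inner_eq_dotProduct (v w : EuclideanSpace ℝ (Fin n)) :
    (inner ℝ v w : ℝ) = (WithLp.equiv 2 (Fin n → ℝ)) v ⬝ᵥ (WithLp.equiv 2 (Fin n → ℝ)) w := by
  simp [PiLp.inner_apply, dotProduct, RCLike.inner_apply, starRingEnd_apply, mul_comm]

lemma dotProduct_eq_inner (v w : Fin n → ℝ) :
    v ⬝ᵥ w = (inner ℝ ((WithLp.equiv 2 (Fin n → ℝ)).symm v)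
      ((WithLp.equiv 2 (Fin n → ℝ)).symm w) : ℝ) := by
  rw [inner_eq_dotProduct, Equiv.apply_symm_apply, Equiv.apply_symm_apply]

lemma dot_aux (P : Matrix (Fin n) (Fin n) ℝ) (w y : Fin n → ℝ) :
    (P *ᵥ w) ⬝ᵥ y = w ⬝ᵥ (Pᵀ *ᵥ y) := by
  rw [dotProduct_comm, dotProduct_mulVec, dotProduct_comm, mulVec_transpose]

lemma herm_transpose {M : Matrix (Fin n) (Fin n) ℝ} (hM : M.IsHermitian) : Mᵀ = M := by
  rw [← M.conjTranspose_eq_transpose_of_trivial, hM.eq]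

lemma isUnit_det_sqrt {A : Matrix (Fin n) (Fin n) ℝ} (hA : A.PosDef) :
    IsUnit hA.posSemidef.sqrt.det := by
  have hU : IsUnit A.det := isUnit_iff_ne_zero.2 (ne_of_gt hA.det_pos)
  rw [← hA.posSemidef.sqrt_mul_self, det_mul] at hU
  exact isUnit_of_mul_isUnit_left hU

lemma posDef_sqrt {A : Matrix (Fin n) (Fin n) ℝ} (hA : A.PosDef) :
    hA.posSemidef.sqrt.PosDef := by
  set S := hA.posSemidef.sqrt with hSdef
  have hS : S.PosSemidef := hA.posSemidef.posSemidef_sqrt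
  have hdet : IsUnit S.det := isUnit_det_sqrt hA
  refine Matrix.PosDef.of_dotProduct_mulVec_pos hS.isHermitian fun x hx => ?_
  set T := hS.sqrt with hTdef
  have hT : T.PosSemidef := hS.posSemidef_sqrt
  have hTT : T * T = S := hS.sqrt_mul_self
  have hquad : star x ⬝ᵥ S *ᵥ x = (T *ᵥ x) ⬝ᵥ (T *ᵥ x) := by
    rw [star_trivial, ← hTT, ← mulVec_mulVec, dot_aux, herm_transpose hT.isHermitian,
      mulVec_mulVec]
  rw [hquad]
  have hne : T *ᵥ x ≠ 0 := by
    intro h0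
    apply hx
    have hSx : S *ᵥ x = 0 := by
      rw [← hTT, ← mulVec_mulVec, h0, mulVec_zero]
    have := congrArg (fun y => S⁻¹ *ᵥ y) hSx
    simpa [mulVec_mulVec, nonsing_inv_mul S hdet] using this
  have hpos : (0:ℝ) < (T *ᵥ x) ⬝ᵥ (T *ᵥ x) := by
    have hnn : (0:ℝ) ≤ (T *ᵥ x) ⬝ᵥ (T *ᵥ x) := by
      simpa using dotProduct_star_self_nonneg (T *ᵥ x)
    rcases hnn.lt_or_eq with h | h
    · exact h
    · exact absurd ((dotProduct_self_eq_zero).1 h.symm) hne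
  simpa using hpos

lemma exists_unit_eigenvector (B : Matrix (Fin n) (Fin n) ℝ) (hB : B.IsHermitian) (hn : 0 < n) :
    ∃ (v : EuclideanSpace ℝ (Fin n)) (μ : ℝ),
      ‖v‖ = 1 ∧ B *ᵥ (WithLp.equiv 2 (Fin n → ℝ)) v = μ • (WithLp.equiv 2 (Fin n → ℝ)) v
        ∧ ‖B‖ ≤ |μ| := by
  haveI : Nonempty (Fin n) := ⟨⟨0, hn⟩⟩
  obtain ⟨i₀, hi₀⟩ := Finite.exists_max (fun i => |hB.eigenvalues i|)
  set b := hB.eigenvectorBasis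
  set μ := hB.eigenvalues i₀
  refine ⟨b i₀, μ, b.orthonormal.1 i₀, hB.mulVec_eigenvectorBasis i₀, ?_⟩
  rw [l2_opNorm_def]
  refine ContinuousLinearMap.opNorm_le_bound _ (abs_nonneg _) fun x => ?_
  have happ : (LinearEquiv.trans (toEuclideanLin (𝕜 := ℝ) (m := Fin n) (n := Fin n))
      LinearMap.toContinuousLinearMap B) x = toEuclideanLin B x := rfl
  rw [happ]
  set y := toEuclideanLin B x with hy
  have hrepr : ∀ i, b.repr y i = hB.eigenvalues i * b.repr x i := by
    intro i
    rw [b.repr_apply_apply, b.repr_apply_apply]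
    rw [inner_eq_dotProduct, inner_eq_dotProduct]
    rw [hy, toEuclideanLin_apply]
    change (b i).ofLp ⬝ᵥ (B *ᵥ x.ofLp) = hB.eigenvalues i * ((b i).ofLp ⬝ᵥ x.ofLp)
    rw [dotProduct_mulVec, ← mulVec_transpose]
    have hBt : Bᵀ = B := herm_transpose hB
    rw [hBt, hB.mulVec_eigenvectorBasis, smul_dotProduct, smul_eq_mul]
  have hnx : ‖y‖ ≤ |μ| * ‖x‖ := by
    rw [← b.repr.norm_map y, ← b.repr.norm_map x]
    rw [EuclideanSpace.norm_eq, EuclideanSpace.norm_eq]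
    rw [← Real.sqrt_sq (by positivity : (0:ℝ) ≤ |μ|), ← Real.sqrt_mul (by positivity)]
    apply Real.sqrt_le_sqrt
    rw [Finset.mul_sum]
    apply Finset.sum_le_sum
    intro i _
    rw [hrepr i]
    have h1 : |hB.eigenvalues i| ≤ |μ| := hi₀ i
    have h2 : ‖hB.eigenvalues i * b.repr x i‖ ≤ |μ| * ‖b.repr x i‖ := by
      rw [Real.norm_eq_abs, Real.norm_eq_abs, abs_mul]
      exact mul_le_mul_of_nonneg_right h1 (abs_nonneg _)
    calc ‖hB.eigenvalues i * b.repr x i‖ ^ 2 ≤ (|μ| * ‖b.repr x i‖) ^ 2 :=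
          pow_le_pow_left₀ (norm_nonneg _) h2 2
      _ = |μ| ^ 2 * ‖b.repr x i‖ ^ 2 := by ring
  exact hnx

lemma dot_mulVec_le_norm (N : Matrix (Fin n) (Fin n) ℝ) (v : Fin n → ℝ)
    (hv : ‖(WithLp.equiv 2 (Fin n → ℝ)).symm v‖ = 1) :
    v ⬝ᵥ N *ᵥ v ≤ ‖N‖ := by
  rw [dotProduct_eq_inner]
  calc (inner ℝ ((WithLp.equiv 2 (Fin n → ℝ)).symm v)
        ((WithLp.equiv 2 (Fin n → ℝ)).symm (N *ᵥ v)) : ℝ)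
      ≤ ‖(WithLp.equiv 2 (Fin n → ℝ)).symm v‖ *
        ‖(WithLp.equiv 2 (Fin n → ℝ)).symm (N *ᵥ v)‖ := real_inner_le_norm _ _
    _ ≤ 1 * (‖N‖ * 1) := by
        rw [hv, one_mul]
        have h : ‖(WithLp.equiv 2 (Fin n → ℝ)).symm (N *ᵥ v)‖ ≤
            ‖N‖ * ‖(WithLp.equiv 2 (Fin n → ℝ)).symm v‖ :=
          N.l2_opNorm_mulVec ((WithLp.equiv 2 (Fin n → ℝ)).symm v)
        rw [hv] at h
        simpa using h
    _ = ‖N‖ := by ring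

lemma abs_dot_mulVec_le_norm (N : Matrix (Fin n) (Fin n) ℝ) (v : Fin n → ℝ)
    (hv : ‖(WithLp.equiv 2 (Fin n → ℝ)).symm v‖ = 1) :
    |v ⬝ᵥ N *ᵥ v| ≤ ‖N‖ := by
  refine abs_le.2 ⟨?_, dot_mulVec_le_norm N v hv⟩
  have h2 := dot_mulVec_le_norm (-N) v hv
  rw [neg_mulVec, dotProduct_neg, norm_neg] at h2
  linarith

lemma one_le_norm_inv_mul {M : Matrix (Fin n) (Fin n) ℝ} (hM : M.PosDef) (v : Fin n → ℝ)
    (hv : ‖(WithLp.equiv 2 (Fin n → ℝ)).symm v‖ = 1) :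
    1 ≤ ‖M⁻¹‖ * (v ⬝ᵥ M *ᵥ v) := by
  set S := hM.posSemidef.sqrt with hSdef
  have hS : S.PosSemidef := hM.posSemidef.posSemidef_sqrt
  have hdet : IsUnit S.det := isUnit_det_sqrt hM
  have hSt : Sᵀ = S := herm_transpose hS.isHermitian
  have hSS : S * S = M := hM.posSemidef.sqrt_mul_self
  have hSit : S⁻¹ᵀ = S⁻¹ := by rw [transpose_nonsing_inv, hSt]
  have hvv : v ⬝ᵥ v = 1 := by
    rw [dotProduct_eq_inner, real_inner_self_eq_norm_sq, hv, one_pow]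
  set a : EuclideanSpace ℝ (Fin n) := (WithLp.equiv 2 (Fin n → ℝ)).symm (S *ᵥ v) with ha
  set b : EuclideanSpace ℝ (Fin n) := (WithLp.equiv 2 (Fin n → ℝ)).symm (S⁻¹ *ᵥ v) with hb
  have h1 : (inner ℝ a b : ℝ) = 1 := by
    rw [ha, hb, ← dotProduct_eq_inner, dot_aux, hSt, mulVec_mulVec,
      mul_nonsing_inv S hdet, one_mulVec, hvv]
  have h2 : ‖a‖ ^ 2 = v ⬝ᵥ M *ᵥ v := by
    rw [← real_inner_self_eq_norm_sq, ha, ← dotProduct_eq_inner, dot_aux, hSt,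
      mulVec_mulVec, hSS]
  have h3 : ‖b‖ ^ 2 = v ⬝ᵥ M⁻¹ *ᵥ v := by
    rw [← real_inner_self_eq_norm_sq, hb, ← dotProduct_eq_inner, dot_aux, hSit,
      mulVec_mulVec, ← Matrix.mul_inv_rev, hSS]
  have h4 : v ⬝ᵥ M⁻¹ *ᵥ v ≤ ‖M⁻¹‖ := dot_mulVec_le_norm M⁻¹ v hv
  have h5 : (1:ℝ) ≤ ‖a‖ * ‖b‖ := h1 ▸ real_inner_le_norm a b
  have h6 : (1:ℝ) ≤ (‖a‖ ^ 2) * (‖b‖ ^ 2) := by nlinarith [norm_nonneg a, norm_nonneg b]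
  rw [h2, h3] at h6
  have h7 : (0:ℝ) ≤ v ⬝ᵥ M *ᵥ v := by rw [← h2]; positivity
  nlinarith

lemma norm_inv_sqrt {M : Matrix (Fin n) (Fin n) ℝ} (hM : M.PosDef) :
    ‖(hM.posSemidef.sqrt)⁻¹‖ = Real.sqrt ‖M⁻¹‖ := by
  have hS : (hM.posSemidef.sqrt).PosSemidef := hM.posSemidef.posSemidef_sqrt
  have hSS : hM.posSemidef.sqrt * hM.posSemidef.sqrt = M := hM.posSemidef.sqrt_mul_self
  have hherm : (hM.posSemidef.sqrt)⁻¹ᴴ = (hM.posSemidef.sqrt)⁻¹ := (hS.inv).isHermitian.eq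
  have hinv : (hM.posSemidef.sqrt)⁻¹ * (hM.posSemidef.sqrt)⁻¹ = M⁻¹ := by
    rw [← Matrix.mul_inv_rev, hSS]
  have h := l2_opNorm_conjTranspose_mul_self ((hM.posSemidef.sqrt)⁻¹)
  rw [hherm, hinv] at h
  rw [h, Real.sqrt_mul_self (norm_nonneg _)]

lemma rpow_three_halves {M : ℝ} (hM : 0 < M) :
    M ^ ((3:ℝ)/2) = M * Real.sqrt M := by
  have h : ((3:ℝ)/2) = 1 + 1/2 := by norm_num
  rw [h, Real.rpow_add hM, Real.rpow_one, ← Real.sqrt_eq_rpow]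

lemma scalar_key {a b N D : ℝ} (ha : 0 < a) (hb : 0 < b) (hD : 0 ≤ D) (hN : 0 ≤ N)
    (h : D * (1 / Real.sqrt a + 1 / Real.sqrt b) ≤ N) :
    Real.sqrt b * D * Real.sqrt a ≤ 1 / 2 * (max a b) ^ ((3:ℝ)/2) * N := by
  set sa := Real.sqrt a with hsa
  set sb := Real.sqrt b with hsb
  have hsa0 : 0 < sa := Real.sqrt_pos.2 ha
  have hsb0 : 0 < sb := Real.sqrt_pos.2 hb
  have hsaa : sa * sa = a := Real.mul_self_sqrt ha.le
  have hsbb : sb * sb = b := Real.mul_self_sqrt hb.le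
  set M := max a b with hMdef
  have hM : 0 < M := lt_max_of_lt_left ha
  set sM := Real.sqrt M with hsM
  have hsM0 : 0 < sM := Real.sqrt_pos.2 hM
  set m := min a b with hmdef
  have hm : 0 < m := lt_min ha hb
  have habMm : a * b = M * m := (max_mul_min a b).symm
  have hsum : D * (sa + sb) ≤ N * (sa * sb) := by
    have h2 := mul_le_mul_of_nonneg_right h (mul_pos hsa0 hsb0).le
    have he2 : (1 / sa + 1 / sb) * (sa * sb) = sa + sb := by
      field_simp
      ring
    rwa [mul_assoc, he2] at h2
  have h2m : 2 * m ≤ sM * (sa + sb) := by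
    have hma : m ≤ Real.sqrt (M * a) := by
      rw [← Real.sqrt_mul_self hm.le]
      apply Real.sqrt_le_sqrt
      have h1 : m ≤ M := min_le_max
      have h2 : m ≤ a := min_le_left a b
      nlinarith
    have hmb : m ≤ Real.sqrt (M * b) := by
      rw [← Real.sqrt_mul_self hm.le]
      apply Real.sqrt_le_sqrt
      have h1 : m ≤ M := min_le_max
      have h2 : m ≤ b := min_le_right a b
      nlinarith
    have hMa : Real.sqrt (M * a) = sM * sa := Real.sqrt_mul hM.le a
    have hMb : Real.sqrt (M * b) = sM * sb := Real.sqrt_mul hM.le b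
    rw [hMa] at hma
    rw [hMb] at hmb
    nlinarith
  rw [rpow_three_halves hM, ← hsM]
  have key : (sb * D * sa) * (sa + sb) ≤ (1 / 2 * (M * sM) * N) * (sa + sb) := by
    have c1 : (sb * D * sa) * (sa + sb) = (sa * sb) * (D * (sa + sb)) := by ring
    have c2 : (sa * sb) * (D * (sa + sb)) ≤ (sa * sb) * (N * (sa * sb)) :=
      mul_le_mul_of_nonneg_left hsum (mul_pos hsa0 hsb0).le
    have c3 : (sa * sb) * (N * (sa * sb)) = (a * b) * N := by
      calc (sa * sb) * (N * (sa * sb)) = (sa * sa) * (sb * sb) * N := by ring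
        _ = (a * b) * N := by rw [hsaa, hsbb]
    have c4 : (a * b) * N = (M * N) * m := by rw [habMm]; ring
    have c5 : (M * N) * (2 * m) ≤ (M * N) * (sM * (sa + sb)) :=
      mul_le_mul_of_nonneg_left h2m (by positivity)
    nlinarith [c5]
  exact le_of_mul_le_mul_right key (by positivity)

lemma sylvester {A₁ A₂ : Matrix (Fin n) (Fin n) ℝ} (hA₁ : A₁.PosDef) (hA₂ : A₂.PosDef)
    (hn : 0 < n) :
    ‖hA₂.posSemidef.sqrt - hA₁.posSemidef.sqrt‖ *
      (1 / ‖(hA₁.posSemidef.sqrt)⁻¹‖ + 1 / ‖(hA₂.posSemidef.sqrt)⁻¹‖) ≤ ‖A₂ - A₁‖ := by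
  set X₁ := hA₁.posSemidef.sqrt with hX₁
  set X₂ := hA₂.posSemidef.sqrt with hX₂
  have hX₁S : X₁.PosSemidef := hA₁.posSemidef.posSemidef_sqrt
  have hX₂S : X₂.PosSemidef := hA₂.posSemidef.posSemidef_sqrt
  set D := X₂ - X₁ with hD
  have hDh : D.IsHermitian := hX₂S.isHermitian.sub hX₁S.isHermitian
  obtain ⟨v, μ, hv1, hvec, hnorm⟩ := exists_unit_eigenvector D hDh hn
  set w : Fin n → ℝ := (WithLp.equiv 2 (Fin n → ℝ)) v with hw
  have hv : ‖(WithLp.equiv 2 (Fin n → ℝ)).symm w‖ = 1 := by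
    rw [hw, Equiv.symm_apply_apply]; exact hv1
  have hId : X₁ * D + D * X₂ = A₂ - A₁ := by
    have h1 : X₁ * X₁ = A₁ := hA₁.posSemidef.sqrt_mul_self
    have h2 : X₂ * X₂ = A₂ := hA₂.posSemidef.sqrt_mul_self
    rw [hD, mul_sub, sub_mul, h1, h2]
    abel
  set q₁ := w ⬝ᵥ X₁ *ᵥ w with hq₁
  set q₂ := w ⬝ᵥ X₂ *ᵥ w with hq₂
  have hDw : D *ᵥ w = μ • w := hvec
  have hDdot : ∀ y : Fin n → ℝ, w ⬝ᵥ D *ᵥ y = μ * (w ⬝ᵥ y) := by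
    intro y
    have := dot_aux D w y
    rw [herm_transpose hDh] at this
    rw [← this, hDw, smul_dotProduct, smul_eq_mul]
  have hq : μ * (q₁ + q₂) = w ⬝ᵥ ((A₂ - A₁) *ᵥ w) := by
    rw [← hId, add_mulVec, dotProduct_add]
    have t1 : w ⬝ᵥ (X₁ * D) *ᵥ w = μ * q₁ := by
      rw [← mulVec_mulVec, hDw, mulVec_smul, dotProduct_smul, smul_eq_mul, hq₁]
    have t2 : w ⬝ᵥ (D * X₂) *ᵥ w = μ * q₂ := by
      rw [← mulVec_mulVec, hDdot (X₂ *ᵥ w), hq₂]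
    rw [t1, t2]
    ring
  have habs : |w ⬝ᵥ ((A₂ - A₁) *ᵥ w)| ≤ ‖A₂ - A₁‖ := abs_dot_mulVec_le_norm _ w hv
  -- lower bounds for q₁, q₂
  have hb₁ := one_le_norm_inv_mul (posDef_sqrt hA₁) w hv
  have hb₂ := one_le_norm_inv_mul (posDef_sqrt hA₂) w hv
  rw [← hX₁] at hb₁
  rw [← hX₂] at hb₂
  set r₁ := ‖X₁⁻¹‖ with hr₁
  set r₂ := ‖X₂⁻¹‖ with hr₂
  have hr₁0 : 0 < r₁ := by
    by_contra hc
    push_neg at hc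
    have : r₁ = 0 := le_antisymm hc (norm_nonneg _)
    rw [this, zero_mul] at hb₁
    linarith
  have hr₂0 : 0 < r₂ := by
    by_contra hc
    push_neg at hc
    have : r₂ = 0 := le_antisymm hc (norm_nonneg _)
    rw [this, zero_mul] at hb₂
    linarith
  have hq₁l : 1 / r₁ ≤ q₁ := by
    rw [div_le_iff₀ hr₁0, mul_comm]
    exact hb₁
  have hq₂l : 1 / r₂ ≤ q₂ := by
    rw [div_le_iff₀ hr₂0, mul_comm]
    exact hb₂
  have hq₁0 : 0 ≤ q₁ := le_trans (one_div_nonneg.2 hr₁0.le) hq₁l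
  have hq₂0 : 0 ≤ q₂ := le_trans (one_div_nonneg.2 hr₂0.le) hq₂l
  calc ‖D‖ * (1 / r₁ + 1 / r₂) ≤ |μ| * (q₁ + q₂) := by
        apply mul_le_mul hnorm (add_le_add hq₁l hq₂l)
          (add_nonneg (one_div_nonneg.2 hr₁0.le) (one_div_nonneg.2 hr₂0.le)) (abs_nonneg μ)
    _ = |μ * (q₁ + q₂)| := by
        rw [abs_mul, abs_of_nonneg (by linarith : (0:ℝ) ≤ q₁ + q₂)]
    _ = |w ⬝ᵥ ((A₂ - A₁) *ᵥ w)| := by rw [hq]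
    _ ≤ ‖A₂ - A₁‖ := habs

end SpNormAux

/-- For real symmetric positive definite matrices `A₁, A₂`, with `Aᵢ^{-1/2}` the inverse of
the (unique) positive definite square root of `Aᵢ`,
`‖A₂^{-1/2} - A₁^{-1/2}‖ ≤ (1/2) · max(‖A₁⁻¹‖, ‖A₂⁻¹‖)^{3/2} · ‖A₂ - A₁‖` in spectral norm. -/
theorem spNorm_inv_sqrt_sub_inv_sqrt_le {n : ℕ} {A₁ A₂ : Matrix (Fin n) (Fin n) ℝ}
    (hA₁ : A₁.PosDef) (hA₂ : A₂.PosDef) :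
    spNorm (hA₂.posSemidef.sqrt⁻¹ - hA₁.posSemidef.sqrt⁻¹) ≤
      (1 / 2) * max (spNorm A₁⁻¹) (spNorm A₂⁻¹) ^ ((3 : ℝ) / 2) * spNorm (A₂ - A₁) := by
  open scoped Matrix.Norms.L2Operator in
  open SpNormAux in
  rcases Nat.eq_zero_or_pos n with rfl | hn
  · -- trivial case n = 0
    haveI : Subsingleton (EuclideanSpace ℝ (Fin 0)) :=
      (WithLp.equiv 2 (Fin 0 → ℝ)).subsingleton
    have hz : ∀ (A : Matrix (Fin 0) (Fin 0) ℝ), spNorm A = 0 := by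
      intro A
      unfold spNorm
      refine le_antisymm (ContinuousLinearMap.opNorm_le_bound _ le_rfl fun x => ?_)
        (norm_nonneg _)
      rw [Subsingleton.elim ((LinearMap.toContinuousLinearMap (toEuclideanLin A)) x) 0]
      simp
    simp only [hz]
    norm_num
  · simp only [spNorm_eq]
    set X₁ := hA₁.posSemidef.sqrt with hX₁
    set X₂ := hA₂.posSemidef.sqrt with hX₂
    have hd₁ : IsUnit X₁.det := isUnit_det_sqrt hA₁
    have hd₂ : IsUnit X₂.det := isUnit_det_sqrt hA₂
    -- inverse difference identity
    have hid : X₂⁻¹ - X₁⁻¹ = X₂⁻¹ * (X₁ - X₂) * X₁⁻¹ := by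
      rw [mul_sub, sub_mul, mul_assoc, mul_nonsing_inv X₁ hd₁, mul_one,
        nonsing_inv_mul X₂ hd₂, one_mul]
    have hchain : ‖X₂⁻¹ - X₁⁻¹‖ ≤ ‖X₂⁻¹‖ * ‖X₂ - X₁‖ * ‖X₁⁻¹‖ := by
      rw [hid]
      calc ‖X₂⁻¹ * (X₁ - X₂) * X₁⁻¹‖ ≤ ‖X₂⁻¹ * (X₁ - X₂)‖ * ‖X₁⁻¹‖ :=
            Matrix.l2_opNorm_mul _ _
        _ ≤ ‖X₂⁻¹‖ * ‖X₁ - X₂‖ * ‖X₁⁻¹‖ := by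
            have := Matrix.l2_opNorm_mul X₂⁻¹ (X₁ - X₂)
            exact mul_le_mul_of_nonneg_right this (norm_nonneg _)
        _ = ‖X₂⁻¹‖ * ‖X₂ - X₁‖ * ‖X₁⁻¹‖ := by rw [norm_sub_rev]
    -- positivity of ‖Aᵢ⁻¹‖
    have hA₁inv_ne : A₁⁻¹ ≠ 0 := by
      intro h0
      have h1 := nonsing_inv_mul A₁ (isUnit_iff_ne_zero.2 (ne_of_gt hA₁.det_pos))
      rw [h0, zero_mul] at h1
      have := congrFun (congrFun h1 ⟨0, hn⟩) ⟨0, hn⟩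
      simp [Matrix.one_apply] at this
    have hA₂inv_ne : A₂⁻¹ ≠ 0 := by
      intro h0
      have h1 := nonsing_inv_mul A₂ (isUnit_iff_ne_zero.2 (ne_of_gt hA₂.det_pos))
      rw [h0, zero_mul] at h1
      have := congrFun (congrFun h1 ⟨0, hn⟩) ⟨0, hn⟩
      simp [Matrix.one_apply] at this
    have ha : (0:ℝ) < ‖A₁⁻¹‖ := norm_pos_iff.2 hA₁inv_ne
    have hb : (0:ℝ) < ‖A₂⁻¹‖ := norm_pos_iff.2 hA₂inv_ne
    have hni₁ : ‖X₁⁻¹‖ = Real.sqrt ‖A₁⁻¹‖ := norm_inv_sqrt hA₁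
    have hni₂ : ‖X₂⁻¹‖ = Real.sqrt ‖A₂⁻¹‖ := norm_inv_sqrt hA₂
    have hsyl := sylvester hA₁ hA₂ hn
    rw [← hX₁, ← hX₂] at hsyl
    rw [hni₁, hni₂] at hsyl
    have hkey := scalar_key ha hb (norm_nonneg (X₂ - X₁)) (norm_nonneg (A₂ - A₁)) hsyl
    calc ‖X₂⁻¹ - X₁⁻¹‖ ≤ ‖X₂⁻¹‖ * ‖X₂ - X₁‖ * ‖X₁⁻¹‖ := hchain
      _ = Real.sqrt ‖A₂⁻¹‖ * ‖X₂ - X₁‖ * Real.sqrt ‖A₁⁻¹‖ := by rw [hni₁, hni₂]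
      _ ≤ 1 / 2 * (max ‖A₁⁻¹‖ ‖A₂⁻¹‖) ^ ((3:ℝ)/2) * ‖A₂ - A₁‖ := hkey
end

section
/- Let w₁, …, w_n ∈ ℝ^m be points (not necessarily distinct), let d ∈ ℝ^m have strictly positive entries, and let a ∈ ℝⁿ. Then the function w ↦ |∑_{j=1}^n a_j · exp(2i⟨w, w_j⟩)|² · exp(−∑_{k=1}^m w_k²/d_k) is Lebesgue-integrable on ℝ^m and aᵀ Ω(d) a = π^{−m/2} · (∏_{k=1}^m d_k)^{−1/2} · ∫_{ℝ^m} |∑_{j=1}^n a_j · exp(2i⟨w, w_j⟩)|² · exp(−∑_{k=1}^m w_k²/d_k) dw, where ⟨·,·⟩ is the Euclidean inner product on ℝ^m, i is the imaginary unit, and |z| is the modulus of the complex number z. In particular aᵀ Ω(d) a ≥ 0. -/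
open Matrix MeasureTheory

/-- The Gaussian Gram matrix of the points `w 0, …, w (n-1) ∈ ℝ^m` with weights `d`:
`Ω(d)_{ij} = exp(-∑ₖ dₖ (wᵢₖ - wⱼₖ)²)`. -/
noncomputable def gaussGram {n m : ℕ} (w : Fin n → Fin m → ℝ) (d : Fin m → ℝ) :
    Matrix (Fin n) (Fin n) ℝ :=
  Matrix.of fun i j => Real.exp (-∑ k, d k * (w i k - w j k) ^ 2)

open Complex in
noncomputable def gTerm {m : ℕ} (d v : Fin m → ℝ) (x : Fin m → ℝ) : ℂ :=
  Complex.exp (-∑ k, (1/(d k) : ℂ) * (x k : ℂ)^2 + ∑ k, (2*Complex.I*(v k : ℂ)) * (x k : ℂ))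

lemma gTerm_integrable {m : ℕ} (d : Fin m → ℝ) (hd : ∀ k, 0 < d k) (v : Fin m → ℝ) :
    Integrable (gTerm d v) := by
  have : gTerm d v = fun x : Fin m → ℝ =>
      ∏ k, Complex.exp (-(1/(d k) : ℂ) * (x k : ℂ)^2 + (2*Complex.I*(v k : ℂ)) * (x k : ℂ)) := by
    funext x
    rw [gTerm, ← Complex.exp_sum]
    congr 1
    rw [Finset.sum_add_distrib, ← Finset.sum_neg_distrib]
    congr 1
    exact Finset.sum_congr rfl fun k _ => by ring
  rw [this]
  apply MeasureTheory.Integrable.fintype_prod_dep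
    (f := fun k (t : ℝ) => Complex.exp (-(1/(d k) : ℂ) * (t : ℂ)^2 + (2*Complex.I*(v k : ℂ)) * (t : ℂ)))
  intro k
  simpa using integrable_cexp_quadratic (b := (1/(d k) : ℂ))
    (by simpa using (hd k)) (2*Complex.I*(v k : ℂ)) 0

lemma gTerm_integral {m : ℕ} (d : Fin m → ℝ) (hd : ∀ k, 0 < d k) (v : Fin m → ℝ) :
    ∫ x : Fin m → ℝ, gTerm d v x
      = ((∏ k, (Real.pi * d k) ^ ((1:ℝ)/2) : ℝ) : ℂ) *
        ((Real.exp (-∑ k, d k * v k ^ 2) : ℝ) : ℂ) := by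
  have h1 : ∫ x : Fin m → ℝ, gTerm d v x
      = ∏ k, (Real.pi / (1/(d k) : ℂ)) ^ (1/2 : ℂ) *
          Complex.exp ((2*Complex.I*(v k : ℂ)) ^ 2 / (4 * (1/(d k) : ℂ))) := by
    exact GaussianFourier.integral_cexp_neg_sum_mul_add (b := fun k => (1/(d k) : ℂ))
      (fun k => by simpa using hd k) (fun k => 2*Complex.I*(v k : ℂ))
  rw [h1, Finset.prod_mul_distrib]
  congr 1
  · rw [Complex.ofReal_prod]
    refine Finset.prod_congr rfl fun k _ => ?_
    have hpd : (0:ℝ) ≤ Real.pi * d k := mul_nonneg Real.pi_pos.le (hd k).le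
    rw [Complex.ofReal_cpow hpd]
    have hdk : (d k : ℂ) ≠ 0 := by exact_mod_cast (hd k).ne'
    push_cast
    rw [one_div (d k : ℂ), div_eq_mul_inv, inv_inv]
  · rw [Complex.ofReal_exp, ← Complex.exp_sum]
    congr 1
    push_cast
    rw [← Finset.sum_neg_distrib]
    refine Finset.sum_congr rfl fun k _ => ?_
    have hdk : (d k : ℂ) ≠ 0 := by exact_mod_cast (hd k).ne'
    have : (2 * Complex.I * (v k : ℂ)) ^ 2 = -4 * (v k : ℂ)^2 := by
      rw [mul_pow, mul_pow, Complex.I_sq]; ring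
    rw [this]
    field_simp

lemma gauss_pointwise {n m : ℕ} (w : Fin n → Fin m → ℝ) (d : Fin m → ℝ) (a : Fin n → ℝ)
    (x : Fin m → ℝ) :
    ((‖∑ j, (a j : ℂ) *
          Complex.exp (2 * Complex.I * ((∑ k, x k * w j k : ℝ) : ℂ))‖ ^ 2 *
        Real.exp (-∑ k, x k ^ 2 / d k) : ℝ) : ℂ)
      = ∑ j, ∑ i, ((a j * a i : ℝ) : ℂ) * gTerm d (fun k => w j k - w i k) x := by
  set S : ℂ := ∑ j, (a j : ℂ) * Complex.exp (2 * Complex.I * ((∑ k, x k * w j k : ℝ) : ℂ)) with hS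
  have h0 : ((‖S‖ ^ 2 : ℝ) : ℂ) = S * (starRingEnd ℂ) S := by
    rw [Complex.sq_norm]
    exact (Complex.mul_conj _).symm
  rw [Complex.ofReal_mul, h0, hS]
  rw [map_sum]
  rw [Finset.sum_mul_sum]
  rw [Finset.sum_mul]
  refine Finset.sum_congr rfl fun j _ => ?_
  rw [Finset.sum_mul]
  refine Finset.sum_congr rfl fun i _ => ?_
  have hconj : (starRingEnd ℂ) (Complex.exp (2 * Complex.I * ((∑ k, x k * w i k : ℝ) : ℂ)))
      = Complex.exp (-(2 * Complex.I * ((∑ k, x k * w i k : ℝ) : ℂ))) := by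
    rw [← Complex.exp_conj]
    congr 1
    simp only [_root_.map_mul, Complex.conj_ofReal, Complex.conj_I]
    rw [show (starRingEnd ℂ) 2 = 2 from Complex.conj_ofNat 2]
    ring
  rw [_root_.map_mul, hconj, Complex.conj_ofReal, Complex.ofReal_exp, gTerm]
  rw [mul_mul_mul_comm, ← Complex.exp_add, mul_assoc, ← Complex.exp_add, Complex.ofReal_mul]
  congr 1
  simp only [Complex.ofReal_sum, Complex.ofReal_mul, Complex.ofReal_div, Complex.ofReal_pow,
    Complex.ofReal_sub, Complex.ofReal_neg, Finset.mul_sum, neg_mul]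
  rw [← Finset.sum_neg_distrib, ← Finset.sum_neg_distrib, ← Finset.sum_add_distrib,
    ← Finset.sum_add_distrib]
  rw [← Finset.sum_neg_distrib, ← Finset.sum_add_distrib]
  congr 1
  exact Finset.sum_congr rfl fun k _ => by ring

/-- Fourier representation of the Gaussian quadratic form: the integrand is integrable and
`aᵀ Ω(d) a = π^{-m/2} (∏ₖ dₖ)^{-1/2} ∫ |∑ⱼ aⱼ e^{2i⟨x, wⱼ⟩}|² e^{-∑ₖ xₖ²/dₖ} dx ≥ 0`. -/
theorem gaussGram_quadform_fourier {n m : ℕ} (w : Fin n → Fin m → ℝ)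
    (d : Fin m → ℝ) (hd : ∀ k, 0 < d k) (a : Fin n → ℝ) :
    Integrable (fun x : Fin m → ℝ =>
      ‖∑ j, (a j : ℂ) *
          Complex.exp (2 * Complex.I * ((∑ k, x k * w j k : ℝ) : ℂ))‖ ^ 2 *
        Real.exp (-∑ k, x k ^ 2 / d k)) volume ∧
    a ⬝ᵥ (gaussGram w d *ᵥ a) =
      Real.pi ^ (-(m : ℝ) / 2) * (∏ k, d k) ^ (-(1 : ℝ) / 2) *
        ∫ x : Fin m → ℝ,
          ‖∑ j, (a j : ℂ) *
              Complex.exp (2 * Complex.I * ((∑ k, x k * w j k : ℝ) : ℂ))‖ ^ 2 *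
            Real.exp (-∑ k, x k ^ 2 / d k) ∧
    0 ≤ a ⬝ᵥ (gaussGram w d *ᵥ a) := by
  set f : (Fin m → ℝ) → ℝ := fun x =>
    ‖∑ j, (a j : ℂ) *
        Complex.exp (2 * Complex.I * ((∑ k, x k * w j k : ℝ) : ℂ))‖ ^ 2 *
      Real.exp (-∑ k, x k ^ 2 / d k) with hf
  set G : (Fin m → ℝ) → ℂ := fun x =>
    ∑ j, ∑ i, ((a j * a i : ℝ) : ℂ) * gTerm d (fun k => w j k - w i k) x with hGdef
  have hfeq : ∀ x, ((f x : ℝ) : ℂ) = G x := fun x => gauss_pointwise w d a x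
  have hG : Integrable G := by
    apply integrable_finset_sum
    intro j _
    apply integrable_finset_sum
    intro i _
    exact (gTerm_integrable d hd _).const_mul _
  have hfint : Integrable f := by
    have h := hG.re
    refine h.congr ?_
    filter_upwards with x
    rw [← hfeq x]
    simp
  set C : ℝ := ∏ k, (Real.pi * d k) ^ ((1:ℝ)/2) with hCdef
  set Q : ℝ := a ⬝ᵥ (gaussGram w d *ᵥ a) with hQdef
  have hQsum : Q = ∑ j, ∑ i, (a j * a i) *
      Real.exp (-∑ k, d k * (w j k - w i k) ^ 2) := by
    simp only [hQdef, dotProduct, mulVec, gaussGram, Matrix.of_apply, Finset.mul_sum]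
    refine Finset.sum_congr rfl fun j _ => ?_
    refine Finset.sum_congr rfl fun i _ => ?_
    ring
  have hIG : ∫ x, G x = (C : ℂ) * (Q : ℂ) := by
    rw [hGdef]
    rw [integral_finset_sum _ (fun j _ => integrable_finset_sum _
      (fun i _ => (gTerm_integrable d hd _).const_mul _))]
    have : ∀ j, ∫ x, ∑ i, ((a j * a i : ℝ) : ℂ) * gTerm d (fun k => w j k - w i k) x
        = ∑ i, ((a j * a i : ℝ) : ℂ) * ((C : ℂ) *
            ((Real.exp (-∑ k, d k * (w j k - w i k) ^ 2) : ℝ) : ℂ)) := by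
      intro j
      rw [integral_finset_sum _ (fun i _ => (gTerm_integrable d hd _).const_mul _)]
      refine Finset.sum_congr rfl fun i _ => ?_
      rw [MeasureTheory.integral_const_mul, gTerm_integral d hd]
    simp only [this]
    rw [hQsum]
    push_cast
    rw [Finset.mul_sum]
    refine Finset.sum_congr rfl fun j _ => ?_
    rw [Finset.mul_sum]
    exact Finset.sum_congr rfl fun i _ => by ring
  have hint_eq : ∫ x, f x = C * Q := by
    have h0 : ∫ x, ((f x : ℝ) : ℂ) = ((∫ x, f x : ℝ) : ℂ) := integral_ofReal
    have h1 : ((∫ x, f x : ℝ) : ℂ) = ∫ x, G x := by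
      rw [← h0]
      exact integral_congr_ae (Filter.Eventually.of_forall hfeq)
    rw [hIG] at h1
    exact_mod_cast h1
  have hP : (0:ℝ) < ∏ k, d k := Finset.prod_pos (fun k _ => hd k)
  have hpi : (0:ℝ) < Real.pi := Real.pi_pos
  have hC : C = Real.pi ^ ((m:ℝ)/2) * (∏ k, d k) ^ ((1:ℝ)/2) := by
    rw [hCdef, Real.finset_prod_rpow _ _ (fun k _ => (mul_pos hpi (hd k)).le),
      Finset.prod_mul_distrib, Finset.prod_const, Finset.card_univ, Fintype.card_fin,
      Real.mul_rpow (by positivity) (Finset.prod_nonneg fun k _ => (hd k).le),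
      ← Real.rpow_natCast Real.pi m, ← Real.rpow_mul hpi.le, mul_one_div]
  have hCpos : 0 < C := by
    rw [hC]; positivity
  have hconst : Real.pi ^ (-(m : ℝ) / 2) * (∏ k, d k) ^ (-(1 : ℝ) / 2) * C = 1 := by
    rw [hC]
    rw [show Real.pi ^ (-(m : ℝ) / 2) * (∏ k, d k) ^ (-(1 : ℝ) / 2) *
        (Real.pi ^ ((m:ℝ)/2) * (∏ k, d k) ^ ((1:ℝ)/2))
      = (Real.pi ^ (-(m : ℝ) / 2) * Real.pi ^ ((m:ℝ)/2)) *
        ((∏ k, d k) ^ (-(1 : ℝ) / 2) * (∏ k, d k) ^ ((1:ℝ)/2)) by ring]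
    rw [← Real.rpow_add hpi, ← Real.rpow_add hP,
      show -(m:ℝ)/2 + (m:ℝ)/2 = 0 by ring, show -(1:ℝ)/2 + (1:ℝ)/2 = 0 by ring,
      Real.rpow_zero, Real.rpow_zero, mul_one]
  have hfnonneg : 0 ≤ ∫ x, f x :=
    integral_nonneg fun x => mul_nonneg (sq_nonneg _) (Real.exp_pos _).le
  have hQnonneg : 0 ≤ Q := by
    have : 0 ≤ C * Q := hint_eq ▸ hfnonneg
    exact nonneg_of_mul_nonneg_right this hCpos
  refine ⟨hfint, ?_, hQnonneg⟩
  rw [hint_eq, ← mul_assoc, hconst, one_mul]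
end

section
/- Let w₁, …, w_n ∈ ℝ^m be points, let 0 < d_L ≤ d_U, and let d ∈ ℝ^m satisfy d_L ≤ d_k ≤ d_U for every k. Then for every a ∈ ℝⁿ: 0 ≤ (d_L/d_U)^{m/2} · aᵀ Ω(d_L·𝟙) a ≤ aᵀ Ω(d) a ≤ (d_U/d_L)^{m/2} · aᵀ Ω(d_U·𝟙) a, where d_L·𝟙 and d_U·𝟙 denote the vectors in ℝ^m with all entries equal to d_L and d_U respectively. -/
open Matrix

open MeasureTheory Real Complex

lemma gauss_integrand_eq {m : ℕ} (d : Fin m → ℝ) (Δ : Fin m → ℝ) (v : Fin m → ℝ) :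
    (Real.exp (-∑ k, (v k) ^ 2 / (4 * d k)) : ℂ) *
        Complex.exp (Complex.I * ∑ k, (v k : ℂ) * (Δ k : ℂ)) =
      Complex.exp (-∑ k, (1 / (4 * (d k : ℂ))) * (v k : ℂ) ^ 2
          + ∑ k, (Complex.I * (Δ k : ℂ)) * (v k : ℂ)) := by
  rw [Complex.ofReal_exp, ← Complex.exp_add]
  congr 1
  push_cast
  rw [Finset.mul_sum]
  congr 1
  · rw [neg_inj]; exact Finset.sum_congr rfl (fun k _ => by ring)
  · exact Finset.sum_congr rfl (fun k _ => by ring)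

lemma gauss_integrand_integrable {m : ℕ} (d : Fin m → ℝ) (hd : ∀ k, 0 < d k) (Δ : Fin m → ℝ) :
    Integrable (fun v : Fin m → ℝ => (Real.exp (-∑ k, (v k) ^ 2 / (4 * d k)) : ℂ) *
        Complex.exp (Complex.I * ∑ k, (v k : ℂ) * (Δ k : ℂ))) := by
  have hb : ∀ k : Fin m, 0 < ((1 / (4 * (d k : ℂ)))).re := by
    intro k
    have h1 : (1 / (4 * (d k : ℝ)) : ℝ) > 0 := by have := hd k; positivity
    have : (1 / (4 * (d k : ℂ))) = ((1 / (4 * d k) : ℝ) : ℂ) := by push_cast; ring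
    rw [this, Complex.ofReal_re]; exact h1
  simp_rw [gauss_integrand_eq d Δ]
  exact GaussianFourier.integrable_cexp_neg_sum_mul_add hb _

lemma entry_repr {m : ℕ} (d : Fin m → ℝ) (hd : ∀ k, 0 < d k) (Δ : Fin m → ℝ) :
    (Real.exp (-∑ k, d k * Δ k ^ 2) : ℂ) =
      (↑(∏ k, (4 * π * d k) ^ (-(1:ℝ)/2)) : ℂ) *
        ∫ v : Fin m → ℝ,
          (Real.exp (-∑ k, (v k) ^ 2 / (4 * d k)) : ℂ) *
            Complex.exp (Complex.I * ∑ k, (v k : ℂ) * (Δ k : ℂ)) := by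
  have hd' : ∀ k, (d k : ℂ) ≠ 0 := fun k => Complex.ofReal_ne_zero.mpr (hd k).ne'
  have hb : ∀ k : Fin m, 0 < ((1 / (4 * (d k : ℂ)))).re := by
    intro k
    have h1 : (1 / (4 * (d k : ℝ)) : ℝ) > 0 := by have := hd k; positivity
    have : (1 / (4 * (d k : ℂ))) = ((1 / (4 * d k) : ℝ) : ℂ) := by push_cast; ring
    rw [this, Complex.ofReal_re]; exact h1
  have key := GaussianFourier.integral_cexp_neg_sum_mul_add (b := fun k => 1 / (4 * (d k : ℂ))) hb
      (fun k => Complex.I * (Δ k : ℂ))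
  have hint : (∫ v : Fin m → ℝ,
          (Real.exp (-∑ k, (v k) ^ 2 / (4 * d k)) : ℂ) *
            Complex.exp (Complex.I * ∑ k, (v k : ℂ) * (Δ k : ℂ)))
      = ∫ v : Fin m → ℝ, Complex.exp (-∑ k, (1 / (4 * (d k : ℂ))) * (v k : ℂ) ^ 2
          + ∑ k, (Complex.I * (Δ k : ℂ)) * (v k : ℂ)) := by
    congr 1; funext v; exact gauss_integrand_eq d Δ v
  rw [hint, key]
  have hterm : ∀ k : Fin m, (↑π / (1 / (4 * (d k : ℂ)))) ^ (1/2 : ℂ) *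
      Complex.exp ((Complex.I * (Δ k : ℂ)) ^ 2 / (4 * (1 / (4 * (d k : ℂ)))))
      = (((4 * π * d k) ^ ((1:ℝ)/2) : ℝ) : ℂ) * Complex.exp (-(d k * Δ k ^ 2 : ℝ)) := by
    intro k
    have h1 : (↑π / (1 / (4 * (d k : ℂ)))) = (((4 * π * d k : ℝ)) : ℂ) := by
      field_simp; push_cast; ring
    have h2 : ((Complex.I * (Δ k : ℂ)) ^ 2 / (4 * (1 / (4 * (d k : ℂ)))))
        = ((-(d k * Δ k ^ 2) : ℝ) : ℂ) := by
      field_simp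
      ring_nf
      rw [Complex.I_sq]
      push_cast; ring
    rw [h1, h2]
    congr 1
    rw [show ((1:ℂ)/2) = (((1/2 : ℝ) : ℝ) : ℂ) by norm_num,
      ← Complex.ofReal_cpow (le_of_lt (by have := hd k; positivity))]
    norm_num
  have hprod : (∏ k : Fin m, (4*π*d k) ^ (-(1:ℝ)/2)) * (∏ k : Fin m, (4*π*d k) ^ ((1:ℝ)/2)) = 1 := by
    rw [← Finset.prod_mul_distrib]
    exact Finset.prod_eq_one (fun k _ => by
      rw [← Real.rpow_add (by have := hd k; positivity)]; norm_num)
  calc (Real.exp (-∑ k, d k * Δ k ^ 2) : ℂ)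
      = (↑(∏ k, (4 * π * d k) ^ (-(1:ℝ)/2)) : ℂ) * ((↑(∏ k, (4 * π * d k) ^ ((1:ℝ)/2)) : ℂ)
          * Complex.exp (↑(-∑ k, d k * Δ k ^ 2))) := by
        rw [← mul_assoc, ← Complex.ofReal_mul, hprod, Complex.ofReal_one, one_mul,
          Complex.ofReal_exp]
    _ = _ := by
        rw [Finset.prod_congr rfl (fun k _ => hterm k), Finset.prod_mul_distrib,
          ← Complex.exp_sum]
        congr 2
        · exact Complex.ofReal_prod _ _
        · push_cast [Finset.sum_neg_distrib]
          ring_nf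

set_option maxHeartbeats 1000000 in
lemma quadform_repr {n m : ℕ} (w : Fin n → Fin m → ℝ) (d : Fin m → ℝ) (hd : ∀ k, 0 < d k)
    (a : Fin n → ℝ) :
    a ⬝ᵥ (gaussGram w d *ᵥ a) =
      (∏ k, (4 * π * d k) ^ (-(1:ℝ)/2)) *
        ∫ v : Fin m → ℝ, Real.exp (-∑ k, (v k) ^ 2 / (4 * d k)) *
          Complex.normSq (∑ j, (a j : ℂ) *
            Complex.exp (Complex.I * ∑ k, (v k : ℂ) * (w j k : ℂ))) := by
  set C : ℝ := ∏ k, (4 * π * d k) ^ (-(1:ℝ)/2) with hC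
  set E : (Fin m → ℝ) → Fin n → ℂ :=
    fun v j => Complex.exp (Complex.I * ∑ k, (v k : ℂ) * (w j k : ℂ)) with hE
  set f : Fin n → Fin n → (Fin m → ℝ) → ℂ := fun i j v =>
    (Real.exp (-∑ k, (v k) ^ 2 / (4 * d k)) : ℂ) *
      Complex.exp (Complex.I * ∑ k, (v k : ℂ) * ((w i k - w j k : ℝ) : ℂ)) with hf
  have hfint : ∀ i j, Integrable (f i j) :=
    fun i j => gauss_integrand_integrable d hd _
  have hpoint : ∀ v : Fin m → ℝ, ∑ i, ∑ j, ((a i : ℂ) * (a j : ℂ)) * f i j v =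
      ((Real.exp (-∑ k, (v k) ^ 2 / (4 * d k)) *
        Complex.normSq (∑ j, (a j : ℂ) * E v j) : ℝ) : ℂ) := by
    intro v
    have hEij : ∀ i j, Complex.exp (Complex.I * ∑ k, (v k : ℂ) * ((w i k - w j k : ℝ) : ℂ))
        = E v i * (starRingEnd ℂ) (E v j) := by
      intro i j
      rw [hE]
      rw [← Complex.exp_conj, ← Complex.exp_add]
      congr 1
      have : (starRingEnd ℂ) (Complex.I * ∑ k, (v k : ℂ) * (w j k : ℂ))
          = -(Complex.I * ∑ k, (v k : ℂ) * (w j k : ℂ)) := by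
        simp [_root_.map_mul, map_sum, Complex.conj_I, ← Complex.ofReal_mul]
      rw [this]
      push_cast
      rw [show ∑ k, (v k : ℂ) * ((w i k : ℂ) - (w j k : ℂ))
          = ∑ k, ((v k : ℂ) * (w i k : ℂ) - (v k : ℂ) * (w j k : ℂ)) from
        Finset.sum_congr rfl (fun k _ => by ring), Finset.sum_sub_distrib]
      ring
    calc ∑ i, ∑ j, ((a i : ℂ) * (a j : ℂ)) * f i j v
        = (Real.exp (-∑ k, (v k) ^ 2 / (4 * d k)) : ℂ) *
            ((∑ i, (a i : ℂ) * E v i) * (∑ j, (a j : ℂ) * (starRingEnd ℂ) (E v j))) := by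
          rw [Finset.sum_mul_sum]
          rw [Finset.mul_sum]
          refine Finset.sum_congr rfl (fun i _ => ?_)
          rw [Finset.mul_sum]
          refine Finset.sum_congr rfl (fun j _ => ?_)
          simp only [hf]
          rw [hEij i j]
          ring
      _ = _ := by
          rw [show (∑ j, (a j : ℂ) * (starRingEnd ℂ) (E v j))
              = (starRingEnd ℂ) (∑ j, (a j : ℂ) * E v j) by
            rw [map_sum]; exact Finset.sum_congr rfl (fun j _ => by
              rw [_root_.map_mul, Complex.conj_ofReal]), Complex.mul_conj]
          push_cast
          ring
  have main : ((a ⬝ᵥ (gaussGram w d *ᵥ a) : ℝ) : ℂ) =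
      (C : ℂ) * ((∫ v : Fin m → ℝ, Real.exp (-∑ k, (v k) ^ 2 / (4 * d k)) *
          Complex.normSq (∑ j, (a j : ℂ) * E v j) : ℝ) : ℂ) := by
    have expand : ((a ⬝ᵥ (gaussGram w d *ᵥ a) : ℝ) : ℂ)
        = ∑ i, ∑ j, ((a i : ℂ) * (a j : ℂ)) *
            (Real.exp (-∑ k, d k * (w i k - w j k) ^ 2) : ℂ) := by
      simp only [dotProduct, mulVec, gaussGram, Matrix.of_apply, Complex.ofReal_sum,
        Complex.ofReal_mul]
      refine Finset.sum_congr rfl (fun i _ => ?_)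
      rw [Finset.mul_sum]
      exact Finset.sum_congr rfl (fun j _ => by ring)
    rw [expand]
    have : ∀ i j : Fin n, (Real.exp (-∑ k, d k * (w i k - w j k) ^ 2) : ℂ)
        = (C : ℂ) * ∫ v, f i j v := fun i j => entry_repr d hd _
    simp_rw [this]
    calc ∑ i, ∑ j, ((a i : ℂ) * (a j : ℂ)) * ((C : ℂ) * ∫ v, f i j v)
        = (C : ℂ) * ∑ i, ∑ j, ∫ v, ((a i : ℂ) * (a j : ℂ)) * f i j v := by
          rw [Finset.mul_sum]
          refine Finset.sum_congr rfl (fun i _ => ?_)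
          rw [Finset.mul_sum]
          refine Finset.sum_congr rfl (fun j _ => ?_)
          rw [integral_const_mul]
          ring
      _ = (C : ℂ) * ∑ i, ∫ v, ∑ j, ((a i : ℂ) * (a j : ℂ)) * f i j v := by
          congr 1
          exact Finset.sum_congr rfl (fun i _ =>
            (integral_finset_sum _ (fun j _ => ((hfint i j).const_mul _))).symm)
      _ = (C : ℂ) * ∫ v, ∑ i, ∑ j, ((a i : ℂ) * (a j : ℂ)) * f i j v := by
          congr 1
          exact (integral_finset_sum _ (fun i _ =>
            integrable_finset_sum _ (fun j _ => ((hfint i j).const_mul _)))).symm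
      _ = _ := by
          rw [show (fun v => ∑ i, ∑ j, ((a i : ℂ) * (a j : ℂ)) * f i j v)
              = fun v => ((Real.exp (-∑ k, (v k) ^ 2 / (4 * d k)) *
                Complex.normSq (∑ j, (a j : ℂ) * E v j) : ℝ) : ℂ) from funext hpoint]
          congr 1
          exact integral_ofReal
  have := main
  rw [← Complex.ofReal_mul] at this
  exact Complex.ofReal_inj.mp this

lemma const_id {m : ℕ} (α β : ℝ) (hα : 0 < α) (hβ : 0 < β) :
    (α / β) ^ ((m:ℝ)/2) * (∏ _k : Fin m, (4*π*α) ^ (-(1:ℝ)/2))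
      = ∏ _k : Fin m, (4*π*β) ^ (-(1:ℝ)/2) := by
  rw [Finset.prod_const, Finset.prod_const, Finset.card_univ, Fintype.card_fin]
  have hbase : (α/β) ^ ((1:ℝ)/2) * (4*π*α) ^ (-(1:ℝ)/2) = (4*π*β) ^ (-(1:ℝ)/2) := by
    have harith : (α/β) * (4*π*α)⁻¹ = (4*π*β)⁻¹ := by
      field_simp
    rw [show (-(1:ℝ)/2) = -((1:ℝ)/2) by norm_num]
    rw [Real.rpow_neg (by positivity), Real.rpow_neg (by positivity),
      ← Real.inv_rpow (by positivity), ← Real.inv_rpow (by positivity),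
      ← Real.mul_rpow (by positivity) (by positivity), harith]
  have h2 : (α/β) ^ ((m:ℝ)/2) = ((α/β) ^ ((1:ℝ)/2)) ^ m := by
    rw [← Real.rpow_natCast ((α/β) ^ ((1:ℝ)/2)) m, ← Real.rpow_mul (by positivity)]
    congr 1
    ring
  rw [h2, ← mul_pow, hbase]

/-- Comparison of Gaussian quadratic forms: if `0 < d_L ≤ dₖ ≤ d_U` for all `k`, then for
every `a`,
`0 ≤ (d_L/d_U)^{m/2} aᵀΩ(d_L𝟙)a ≤ aᵀΩ(d)a ≤ (d_U/d_L)^{m/2} aᵀΩ(d_U𝟙)a`. -/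
theorem gaussGram_quadform_comparison {n m : ℕ} (w : Fin n → Fin m → ℝ)
    (dL dU : ℝ) (hL : 0 < dL) (hLU : dL ≤ dU)
    (d : Fin m → ℝ) (hd : ∀ k, dL ≤ d k ∧ d k ≤ dU) (a : Fin n → ℝ) :
    0 ≤ (dL / dU) ^ ((m : ℝ) / 2) * (a ⬝ᵥ (gaussGram w (fun _ => dL) *ᵥ a)) ∧
    (dL / dU) ^ ((m : ℝ) / 2) * (a ⬝ᵥ (gaussGram w (fun _ => dL) *ᵥ a)) ≤
      a ⬝ᵥ (gaussGram w d *ᵥ a) ∧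
    a ⬝ᵥ (gaussGram w d *ᵥ a) ≤
      (dU / dL) ^ ((m : ℝ) / 2) * (a ⬝ᵥ (gaussGram w (fun _ => dU) *ᵥ a)) := by
  have hU : 0 < dU := lt_of_lt_of_le hL hLU
  have hdpos : ∀ k, 0 < d k := fun k => lt_of_lt_of_le hL (hd k).1
  set N : (Fin m → ℝ) → ℝ := fun v => Complex.normSq (∑ j, (a j : ℂ) *
    Complex.exp (Complex.I * ∑ k, (v k : ℂ) * (w j k : ℂ))) with hN
  set J : (Fin m → ℝ) → ℝ :=
    fun e => ∫ v : Fin m → ℝ, Real.exp (-∑ k, (v k) ^ 2 / (4 * e k)) * N v with hJ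
  have hrepr : ∀ e : Fin m → ℝ, (∀ k, 0 < e k) →
      a ⬝ᵥ (gaussGram w e *ᵥ a) = (∏ k, (4 * π * e k) ^ (-(1:ℝ)/2)) * J e :=
    fun e he => quadform_repr w e he a
  have hNc : Continuous N := by
    apply Complex.continuous_normSq.comp
    apply continuous_finset_sum
    intro j _
    apply continuous_const.mul
    apply Complex.continuous_exp.comp
    apply continuous_const.mul
    apply continuous_finset_sum
    intro k _
    exact (Complex.continuous_ofReal.comp (continuous_apply k)).mul continuous_const
  have hNnonneg : ∀ v, 0 ≤ N v := fun v => Complex.normSq_nonneg _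
  have hNb : ∀ v, N v ≤ (∑ j, |a j|) ^ 2 := by
    intro v
    have h1 : ‖∑ j, (a j : ℂ) *
        Complex.exp (Complex.I * ∑ k, (v k : ℂ) * (w j k : ℂ))‖ ≤ ∑ j, |a j| := by
      refine le_trans (norm_sum_le _ _) (le_of_eq ?_)
      refine Finset.sum_congr rfl (fun j _ => ?_)
      rw [norm_mul, Complex.norm_real, Real.norm_eq_abs]
      have : ‖Complex.exp (Complex.I * ∑ k, (v k : ℂ) * (w j k : ℂ))‖ = 1 := by
        rw [show ((∑ k, (v k : ℂ) * (w j k : ℂ))) = ((∑ k, v k * w j k : ℝ) : ℂ) by push_cast; rfl,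
          Complex.norm_exp]
        simp
      rw [this, mul_one]
    calc N v = ‖_‖ ^ 2 := (Complex.sq_norm _).symm
      _ ≤ (∑ j, |a j|) ^ 2 := pow_le_pow_left₀ (norm_nonneg _) h1 2
  have hρint : ∀ e : Fin m → ℝ, (∀ k, 0 < e k) →
      Integrable (fun v : Fin m → ℝ => Real.exp (-∑ k, (v k) ^ 2 / (4 * e k))) := by
    intro e he
    have heq : (fun v : Fin m → ℝ => Real.exp (-∑ k, (v k) ^ 2 / (4 * e k)))
        = fun v => ∏ k, Real.exp (-(1/(4 * e k)) * (v k) ^ 2) := by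
      funext v
      rw [← Real.exp_sum]
      congr 1
      rw [← Finset.sum_neg_distrib]
      exact Finset.sum_congr rfl (fun k _ => by ring)
    rw [heq]
    apply Integrable.fintype_prod (f := fun k (x : ℝ) => Real.exp (-(1/(4 * e k)) * x ^ 2))
    intro k
    exact integrable_exp_neg_mul_sq (by have := he k; positivity)
  have hJint : ∀ e : Fin m → ℝ, (∀ k, 0 < e k) →
      Integrable (fun v : Fin m → ℝ => Real.exp (-∑ k, (v k) ^ 2 / (4 * e k)) * N v) := by
    intro e he
    have := (hρint e he).bdd_mul hNc.aestronglyMeasurable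
      (c := (∑ j, |a j|) ^ 2) (Filter.Eventually.of_forall fun v => by
        rw [Real.norm_eq_abs, _root_.abs_of_nonneg (hNnonneg v)]; exact hNb v)
    simpa [mul_comm] using this
  have hJnonneg : ∀ e : Fin m → ℝ, 0 ≤ J e := fun e =>
    integral_nonneg (fun v => mul_nonneg (Real.exp_nonneg _) (hNnonneg v))
  have hJmono : ∀ e e' : Fin m → ℝ, (∀ k, 0 < e k) → (∀ k, e k ≤ e' k) → J e ≤ J e' := by
    intro e e' he hee
    have he' : ∀ k, 0 < e' k := fun k => lt_of_lt_of_le (he k) (hee k)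
    refine integral_mono_of_nonneg
      (Filter.Eventually.of_forall fun v => mul_nonneg (Real.exp_nonneg _) (hNnonneg v))
      (hJint e' he') (Filter.Eventually.of_forall fun v => ?_)
    refine mul_le_mul_of_nonneg_right ?_ (hNnonneg v)
    refine Real.exp_le_exp.mpr (neg_le_neg ?_)
    refine Finset.sum_le_sum (fun k _ => ?_)
    exact div_le_div_of_nonneg_left (sq_nonneg _) (by have := he k; positivity)
      (by have := hee k; linarith)
  have hCmono : ∀ e e' : Fin m → ℝ, (∀ k, 0 < e k) → (∀ k, e k ≤ e' k) →
      (∏ k, (4 * π * e' k) ^ (-(1:ℝ)/2)) ≤ ∏ k, (4 * π * e k) ^ (-(1:ℝ)/2) := by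
    intro e e' he hee
    have he' : ∀ k, 0 < e' k := fun k => lt_of_lt_of_le (he k) (hee k)
    refine Finset.prod_le_prod (fun k _ => Real.rpow_nonneg ?_ _) (fun k _ => ?_)
    · have := he' k; positivity
    · refine Real.rpow_le_rpow_of_nonpos ?_ ?_ (by norm_num)
      · have := he k; positivity
      · have := hee k; nlinarith [Real.pi_pos]
  have hCnonneg : ∀ e : Fin m → ℝ, (∀ k, 0 < e k) →
      0 ≤ ∏ k, (4 * π * e k) ^ (-(1:ℝ)/2) := fun e he =>
    Finset.prod_nonneg (fun k _ => Real.rpow_nonneg (by have := he k; positivity) _)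
  have hLpos : ∀ k : Fin m, (0:ℝ) < (fun _ => dL) k := fun _ => hL
  have hUpos : ∀ k : Fin m, (0:ℝ) < (fun _ => dU) k := fun _ => hU
  rw [hrepr d hdpos, hrepr _ hLpos, hrepr _ hUpos]
  refine ⟨?_, ?_, ?_⟩
  · exact mul_nonneg (Real.rpow_nonneg (by positivity) _)
      (mul_nonneg (hCnonneg _ hLpos) (hJnonneg _))
  · calc (dL / dU) ^ ((m:ℝ)/2) * ((∏ k : Fin m, (4 * π * dL) ^ (-(1:ℝ)/2)) * J (fun _ => dL))
        = ((dL / dU) ^ ((m:ℝ)/2) * ∏ _k : Fin m, (4 * π * dL) ^ (-(1:ℝ)/2)) * J (fun _ => dL) := by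
          ring
      _ = (∏ _k : Fin m, (4 * π * dU) ^ (-(1:ℝ)/2)) * J (fun _ => dL) := by
          rw [const_id dL dU hL hU]
      _ ≤ (∏ k, (4 * π * d k) ^ (-(1:ℝ)/2)) * J d := by
          refine mul_le_mul (hCmono d (fun _ => dU) hdpos (fun k => (hd k).2))
            (hJmono _ d hLpos (fun k => (hd k).1)) (hJnonneg _) (hCnonneg d hdpos)
  · calc (∏ k, (4 * π * d k) ^ (-(1:ℝ)/2)) * J d
        ≤ (∏ _k : Fin m, (4 * π * dL) ^ (-(1:ℝ)/2)) * J (fun _ => dU) := by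
          refine mul_le_mul (hCmono (fun _ => dL) d hLpos (fun k => (hd k).1))
            (hJmono d _ hdpos (fun k => (hd k).2)) (hJnonneg _) (hCnonneg _ hLpos)
      _ = ((dU / dL) ^ ((m:ℝ)/2) * ∏ _k : Fin m, (4 * π * dU) ^ (-(1:ℝ)/2)) * J (fun _ => dU) := by
          rw [const_id dU dL hU hL]
      _ = (dU / dL) ^ ((m:ℝ)/2) * ((∏ k : Fin m, (4 * π * dU) ^ (-(1:ℝ)/2)) * J (fun _ => dU)) := by
          ring
end

section
/- Let Ω be a real symmetric positive definite n×n matrix, and let M be a real n×p matrix whose columns each sum to zero (𝟙ᵀM = 0, with 𝟙 the all-ones vector in ℝⁿ) and which has trivial kernel (Mu = 0 implies u = 0). Then the p×p matrix Mᵀ𝔻M is positive definite; in particular it is invertible. -/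
open Matrix

/-- The all-ones vector in `ℝⁿ`. -/
def onesVec (n : ℕ) : Fin n → ℝ := fun _ => 1

/-- The centering matrix `𝔻 = Ω - (𝟙ᵀΩ𝟙)⁻¹ Ω𝟙𝟙ᵀΩ`. -/
noncomputable def centerMat {n : ℕ} (Ω : Matrix (Fin n) (Fin n) ℝ) :
    Matrix (Fin n) (Fin n) ℝ :=
  Ω - (onesVec n ⬝ᵥ (Ω *ᵥ onesVec n))⁻¹ •
    (Ω * Matrix.vecMulVec (onesVec n) (onesVec n) * Ω)

lemma vecMulVec_mulVec' {n : ℕ} (u v w : Fin n → ℝ) :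
    Matrix.vecMulVec u v *ᵥ w = (v ⬝ᵥ w) • u := by
  funext i
  simp [Matrix.vecMulVec_apply, Matrix.mulVec, dotProduct, Finset.sum_mul,
    Finset.mul_sum]
  exact Finset.sum_congr rfl fun j _ => by ring

/-- If `Ω` is real symmetric positive definite and `M` is an `n × p` matrix whose columns
each sum to zero and whose kernel is trivial, then `Mᵀ𝔻M` is positive definite, in
particular invertible. -/
theorem transpose_centerMat_mul_posDef {n p : ℕ}
    {Ω : Matrix (Fin n) (Fin n) ℝ} (hΩ : Ω.PosDef)
    (M : Matrix (Fin n) (Fin p) ℝ)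
    (hcol : onesVec n ᵥ* M = 0)
    (hker : ∀ u : Fin p → ℝ, M *ᵥ u = 0 → u = 0) :
    (Mᵀ * centerMat Ω * M).PosDef ∧ IsUnit (Mᵀ * centerMat Ω * M) := by
  have hΩt : Ωᵀ = Ω := by
    have := hΩ.1
    rwa [Matrix.IsHermitian, Matrix.conjTranspose_eq_transpose_of_trivial] at this
  have hsym : ∀ u v : Fin n → ℝ, u ⬝ᵥ (Ω *ᵥ v) = v ⬝ᵥ (Ω *ᵥ u) := by
    intro u v
    rw [Matrix.dotProduct_mulVec, ← hΩt, Matrix.vecMul_transpose, hΩt,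
      dotProduct_comm]
  -- Hermitian
  have hherm : (Mᵀ * centerMat Ω * M).IsHermitian := by
    rw [Matrix.IsHermitian, Matrix.conjTranspose_eq_transpose_of_trivial]
    simp only [centerMat, Matrix.transpose_mul, Matrix.transpose_sub, Matrix.transpose_smul,
      Matrix.transpose_transpose, hΩt]
    have hvv : (Matrix.vecMulVec (onesVec n) (onesVec n))ᵀ =
        Matrix.vecMulVec (onesVec n) (onesVec n) := by
      ext i j; simp [Matrix.vecMulVec_apply, mul_comm]
    rw [hvv]
    noncomm_ring
    rw [Matrix.mul_assoc]
  have hpos : ∀ x : Fin p → ℝ, x ≠ 0 →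
      0 < x ⬝ᵥ ((Mᵀ * centerMat Ω * M) *ᵥ x) := by
    intro x hx
    set y := M *ᵥ x with hy
    have hy0 : y ≠ 0 := fun h => hx (hker x h)
    have hn : 0 < n := by
      rcases Nat.eq_zero_or_pos n with h | h
      · exact absurd (by subst h; funext i; exact i.elim0) hy0
      · exact h
    have he0 : (onesVec n) ≠ 0 := by
      intro h
      have := congrFun h ⟨0, hn⟩
      simp [onesVec] at this
    have ha : 0 < onesVec n ⬝ᵥ (Ω *ᵥ onesVec n) := by
      have := hΩ.dotProduct_mulVec_pos he0
      simpa using this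
    set a := onesVec n ⬝ᵥ (Ω *ᵥ onesVec n) with hadef
    set b := onesVec n ⬝ᵥ (Ω *ᵥ y) with hbdef
    set c := y ⬝ᵥ (Ω *ᵥ y) with hcdef
    have hyb : y ⬝ᵥ (Ω *ᵥ onesVec n) = b := hsym y (onesVec n)
    -- reduce quadratic form to y
    have h1 : x ⬝ᵥ ((Mᵀ * centerMat Ω * M) *ᵥ x) = c - a⁻¹ * b ^ 2 := by
      rw [← Matrix.mulVec_mulVec, ← Matrix.mulVec_mulVec,
        Matrix.dotProduct_mulVec x Mᵀ, Matrix.vecMul_transpose, ← hy]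
      have hD : centerMat Ω *ᵥ y = Ω *ᵥ y - (a⁻¹ * b) • (Ω *ᵥ onesVec n) := by
        rw [centerMat, Matrix.sub_mulVec, Matrix.smul_mulVec,
          ← Matrix.mulVec_mulVec, ← Matrix.mulVec_mulVec, vecMulVec_mulVec', ← hbdef,
          Matrix.mulVec_smul, ← hadef, smul_smul]
      rw [hD, dotProduct_sub, dotProduct_smul, ← hcdef, hyb]
      simp [smul_eq_mul]
      ring
    -- 𝟙ᵀ y = 0
    have hey : onesVec n ⬝ᵥ y = 0 := by
      rw [hy, Matrix.dotProduct_mulVec, hcol, zero_dotProduct]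
    -- the shifted vector
    set z : Fin n → ℝ := y - (a⁻¹ * b) • onesVec n with hz
    have hz0 : z ≠ 0 := by
      intro h
      have hyz : y = (a⁻¹ * b) • onesVec n := by
        have := sub_eq_zero.mp h
        exact this
      have : onesVec n ⬝ᵥ ((a⁻¹ * b) • onesVec n) = 0 := by rw [← hyz, hey]
      rw [dotProduct_smul] at this
      have hsum : onesVec n ⬝ᵥ onesVec n = (n : ℝ) := by
        simp [onesVec, dotProduct]
      rw [hsum, smul_eq_mul, mul_eq_zero] at this
      rcases this with h' | h'
      · rw [mul_eq_zero] at h'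
        rcases h' with h'' | h''
        · exact absurd h'' (inv_ne_zero ha.ne')
        · apply hy0
          rw [hyz, h'']
          simp
      · exact absurd h' (Nat.cast_ne_zero.mpr hn.ne')
    have hzval : z ⬝ᵥ (Ω *ᵥ z) = c - a⁻¹ * b ^ 2 := by
      rw [hz, sub_dotProduct, Matrix.mulVec_sub, dotProduct_sub,
        dotProduct_sub, Matrix.mulVec_smul, dotProduct_smul,
        dotProduct_smul, smul_dotProduct, smul_dotProduct,
        ← hcdef, hyb, ← hbdef, ← hadef]
      simp only [smul_eq_mul]
      field_simp
      ring
    have hzpos : 0 < z ⬝ᵥ (Ω *ᵥ z) := by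
      have := hΩ.dotProduct_mulVec_pos hz0
      simpa using this
    rw [h1, ← hzval]
    exact hzpos
  have hPD : (Mᵀ * centerMat Ω * M).PosDef := by
    refine Matrix.PosDef.of_dotProduct_mulVec_pos hherm fun x hx => ?_
    have := hpos x hx
    simpa using this
  exact ⟨hPD, hPD.isUnit⟩
end

section
/- Let Ω be a real symmetric positive definite n×n matrix, X a real n×p matrix, and y ∈ ℝⁿ; set 𝔻 = Ω − (𝟙ᵀΩ𝟙)⁻¹ Ω 𝟙 𝟙ᵀ Ω and assume Xᵀ𝔻X is invertible. Define β̂ = (Xᵀ𝔻X)⁻¹ Xᵀ𝔻 y and γ̂ = (𝟙ᵀΩ𝟙)⁻¹ 𝟙ᵀΩ (y − Xβ̂). Then (γ̂, β̂) minimizes the generalized least-squares objective: for all γ ∈ ℝ and β ∈ ℝ^p, (y − γ̂·𝟙 − Xβ̂)ᵀ Ω (y − γ̂·𝟙 − Xβ̂) ≤ (y − γ·𝟙 − Xβ)ᵀ Ω (y − γ·𝟙 − Xβ); moreover the minimal value equals yᵀ B̂ y, where B̂ = 𝔻 − 𝔻 X (Xᵀ𝔻X)⁻¹ Xᵀ 𝔻.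 -/
open Matrix

/-- The generalized least-squares slope `bh = (Xᵀ𝔻X)⁻¹Xᵀ𝔻y`. -/
noncomputable def betaGLS {n p : ℕ} (Ω : Matrix (Fin n) (Fin n) ℝ)
    (X : Matrix (Fin n) (Fin p) ℝ) (y : Fin n → ℝ) : Fin p → ℝ :=
  (Xᵀ * centerMat Ω * X)⁻¹ *ᵥ ((Xᵀ * centerMat Ω) *ᵥ y)

/-- The generalized least-squares intercept `γ̂ = (𝟙ᵀΩ𝟙)⁻¹𝟙ᵀΩ(y - Xbh)`. -/
noncomputable def gammaGLS {n p : ℕ} (Ω : Matrix (Fin n) (Fin n) ℝ)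
    (X : Matrix (Fin n) (Fin p) ℝ) (y : Fin n → ℝ) : ℝ :=
  (onesVec n ⬝ᵥ (Ω *ᵥ onesVec n))⁻¹ *
    (onesVec n ⬝ᵥ (Ω *ᵥ (y - X *ᵥ betaGLS Ω X y)))

namespace GLSaux

variable {n p : ℕ}

/-- symmetric dot product swap -/
lemma sym_dot {Ω : Matrix (Fin n) (Fin n) ℝ} (hs : Ωᵀ = Ω) (u v : Fin n → ℝ) :
    u ⬝ᵥ (Ω *ᵥ v) = v ⬝ᵥ (Ω *ᵥ u) := by
  rw [dotProduct_mulVec, ← vecMul_transpose, hs, dotProduct_comm]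

lemma mulVec_dot (X : Matrix (Fin n) (Fin p) ℝ) (d : Fin p → ℝ) (w : Fin n → ℝ) :
    (X *ᵥ d) ⬝ᵥ w = d ⬝ᵥ (Xᵀ *ᵥ w) := by
  rw [dotProduct_comm, dotProduct_mulVec, ← mulVec_transpose, dotProduct_comm]

lemma vecMulVec_mulVec (u v w : Fin n → ℝ) :
    Matrix.vecMulVec u v *ᵥ w = (v ⬝ᵥ w) • u := by
  funext i
  simp only [Matrix.mulVec, Matrix.vecMulVec_apply, dotProduct, Pi.smul_apply, smul_eq_mul,
    Finset.sum_mul]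
  exact Finset.sum_congr rfl fun x _ => by ring

lemma centerMat_mulVec (Ω : Matrix (Fin n) (Fin n) ℝ) (r : Fin n → ℝ) :
    centerMat Ω *ᵥ r = Ω *ᵥ r -
      (onesVec n ⬝ᵥ (Ω *ᵥ onesVec n))⁻¹ •
        ((onesVec n ⬝ᵥ (Ω *ᵥ r)) • (Ω *ᵥ onesVec n)) := by
  simp only [centerMat, Matrix.sub_mulVec, Matrix.smul_mulVec, ← Matrix.mulVec_mulVec,
    vecMulVec_mulVec, Matrix.mulVec_smul]

lemma quad_centerMat (Ω : Matrix (Fin n) (Fin n) ℝ) (u r : Fin n → ℝ) :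
    u ⬝ᵥ (centerMat Ω *ᵥ r) = u ⬝ᵥ (Ω *ᵥ r) -
      (onesVec n ⬝ᵥ (Ω *ᵥ onesVec n))⁻¹ *
        ((onesVec n ⬝ᵥ (Ω *ᵥ r)) * (u ⬝ᵥ (Ω *ᵥ onesVec n))) := by
  rw [centerMat_mulVec, dotProduct_sub, dotProduct_smul, dotProduct_smul, smul_eq_mul,
    smul_eq_mul]

lemma centerMat_transpose (Ω : Matrix (Fin n) (Fin n) ℝ) (hs : Ωᵀ = Ω) :
    (centerMat Ω)ᵀ = centerMat Ω := by
  have hV : (Matrix.vecMulVec (onesVec n) (onesVec n))ᵀ = Matrix.vecMulVec (onesVec n) (onesVec n) := by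
    ext i j
    simp [Matrix.transpose_apply, Matrix.vecMulVec_apply, onesVec]
  rw [centerMat, Matrix.transpose_sub, Matrix.transpose_smul, Matrix.transpose_mul,
    Matrix.transpose_mul, hs, hV, Matrix.mul_assoc]

/-- key scalar identity -/
lemma keyA {Ω : Matrix (Fin n) (Fin n) ℝ} (hsym : Ωᵀ = Ω)
    (hs : onesVec n ⬝ᵥ (Ω *ᵥ onesVec n) ≠ 0) (γ : ℝ) (r : Fin n → ℝ) :
    (r - γ • onesVec n) ⬝ᵥ (Ω *ᵥ (r - γ • onesVec n)) =
      (onesVec n ⬝ᵥ (Ω *ᵥ onesVec n)) *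
        (γ - (onesVec n ⬝ᵥ (Ω *ᵥ onesVec n))⁻¹ * (onesVec n ⬝ᵥ (Ω *ᵥ r)))^2 +
      r ⬝ᵥ (centerMat Ω *ᵥ r) := by
  have h1 : r ⬝ᵥ (Ω *ᵥ onesVec n) = onesVec n ⬝ᵥ (Ω *ᵥ r) := sym_dot hsym r (onesVec n)
  rw [quad_centerMat, Matrix.mulVec_sub, Matrix.mulVec_smul, dotProduct_sub, sub_dotProduct,
    sub_dotProduct, dotProduct_smul, dotProduct_smul, smul_dotProduct, smul_dotProduct,
    smul_eq_mul, smul_eq_mul, smul_eq_mul, smul_eq_mul, h1]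
  field_simp
  ring

lemma centerMat_psd {Ω : Matrix (Fin n) (Fin n) ℝ} (hΩ : Ω.PosDef)
    (hsym : Ωᵀ = Ω) (hs : onesVec n ⬝ᵥ (Ω *ᵥ onesVec n) ≠ 0) (w : Fin n → ℝ) :
    0 ≤ w ⬝ᵥ (centerMat Ω *ᵥ w) := by
  set s := onesVec n ⬝ᵥ (Ω *ᵥ onesVec n) with hsdef
  have := keyA hsym hs (s⁻¹ * (onesVec n ⬝ᵥ (Ω *ᵥ w))) w
  rw [sub_self, show (0:ℝ)^2 = 0 by norm_num, mul_zero, zero_add] at this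
  have hnn : 0 ≤ (w - (s⁻¹ * (onesVec n ⬝ᵥ (Ω *ᵥ w))) • onesVec n) ⬝ᵥ
      (Ω *ᵥ (w - (s⁻¹ * (onesVec n ⬝ᵥ (Ω *ᵥ w))) • onesVec n)) := by
    have h := hΩ.posSemidef.dotProduct_mulVec_nonneg (w - (s⁻¹ * (onesVec n ⬝ᵥ (Ω *ᵥ w))) • onesVec n)
    simpa using h
  linarith [this ▸ hnn]

end GLSaux

/-- The pair `(γ̂, bh)` minimizes the generalized least-squares objective
`(y - γ𝟙 - Xβ)ᵀΩ(y - γ𝟙 - Xβ)`, and the minimal value equals `yᵀB̂y` with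
`B̂ = 𝔻 - 𝔻X(Xᵀ𝔻X)⁻¹Xᵀ𝔻`. -/
theorem gls_minimizer {n p : ℕ} {Ω : Matrix (Fin n) (Fin n) ℝ} (hΩ : Ω.PosDef)
    (X : Matrix (Fin n) (Fin p) ℝ) (y : Fin n → ℝ)
    (hX : IsUnit (Xᵀ * centerMat Ω * X)) :
    (∀ (γ : ℝ) (β : Fin p → ℝ),
      (y - gammaGLS Ω X y • onesVec n - X *ᵥ betaGLS Ω X y) ⬝ᵥ
          (Ω *ᵥ (y - gammaGLS Ω X y • onesVec n - X *ᵥ betaGLS Ω X y)) ≤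
        (y - γ • onesVec n - X *ᵥ β) ⬝ᵥ (Ω *ᵥ (y - γ • onesVec n - X *ᵥ β))) ∧
    (y - gammaGLS Ω X y • onesVec n - X *ᵥ betaGLS Ω X y) ⬝ᵥ
        (Ω *ᵥ (y - gammaGLS Ω X y • onesVec n - X *ᵥ betaGLS Ω X y)) =
      y ⬝ᵥ ((centerMat Ω -
          centerMat Ω * X * (Xᵀ * centerMat Ω * X)⁻¹ * Xᵀ * centerMat Ω) *ᵥ y) := by
  classical
  rcases Nat.eq_zero_or_pos n with hn | hn
  · subst hn
    constructor
    · intro γ β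
      simp [dotProduct]
    · simp [dotProduct]
  -- main case
  have hsym : Ωᵀ = Ω := by
    rw [← Matrix.conjTranspose_eq_transpose_of_trivial]
    exact hΩ.1
  set s := onesVec n ⬝ᵥ (Ω *ᵥ onesVec n) with hsdef
  have hone : onesVec n ≠ 0 := by
    intro h
    have := congrFun h ⟨0, hn⟩
    simp [onesVec] at this
  have hspos : 0 < s := by
    have := hΩ.dotProduct_mulVec_pos hone
    simpa using this
  have hs : s ≠ 0 := ne_of_gt hspos
  set D := centerMat Ω with hD
  have hDsym : Dᵀ = D := GLSaux.centerMat_transpose Ω hsym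
  set M := Xᵀ * D * X with hM
  set bh := betaGLS Ω X y with hβ
  set rh := y - X *ᵥ bh with hr
  clear_value D M bh rh
  have hMinv : M * M⁻¹ = 1 := Matrix.mul_nonsing_inv M ((Matrix.isUnit_iff_isUnit_det M).mp hX)
  -- normal equation : Xᵀ D rh = 0
  have hnormal : Xᵀ *ᵥ (D *ᵥ rh) = 0 := by
    have hMb : M *ᵥ bh = (Xᵀ * D) *ᵥ y := by
      rw [hβ, betaGLS, ← hD, ← hM, Matrix.mulVec_mulVec, hMinv, Matrix.one_mulVec]
    have : Xᵀ *ᵥ (D *ᵥ rh) = (Xᵀ * D) *ᵥ y - M *ᵥ bh := by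
      simp only [hr, Matrix.mulVec_sub, Matrix.mulVec_mulVec, hM, Matrix.mul_assoc]
    rw [this, hMb, sub_self]
  -- quadratic expansion in β
  have hquad : ∀ β : Fin p → ℝ, (y - X *ᵥ β) ⬝ᵥ (D *ᵥ (y - X *ᵥ β)) =
      rh ⬝ᵥ (D *ᵥ rh) + (X *ᵥ (β - bh)) ⬝ᵥ (D *ᵥ (X *ᵥ (β - bh))) := by
    intro β
    have hyX : y - X *ᵥ β = rh - X *ᵥ (β - bh) := by
      rw [hr, Matrix.mulVec_sub]
      abel
    have hc1 : (X *ᵥ (β - bh)) ⬝ᵥ (D *ᵥ rh) = 0 := by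
      rw [GLSaux.mulVec_dot, hnormal, dotProduct_zero]
    have hc2 : rh ⬝ᵥ (D *ᵥ (X *ᵥ (β - bh))) = 0 := by
      rw [GLSaux.sym_dot hDsym, hc1]
    set v := X *ᵥ (β - bh) with hv
    clear_value v
    rw [hyX, Matrix.mulVec_sub, dotProduct_sub, sub_dotProduct, sub_dotProduct, hc1, hc2]
    ring
  -- the objective at (γ̂ , bh)
  have hγ : gammaGLS Ω X y = s⁻¹ * (onesVec n ⬝ᵥ (Ω *ᵥ rh)) := by
    rw [gammaGLS, ← hsdef, ← hβ, ← hr]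
  have hobj : ∀ (γ : ℝ) (β : Fin p → ℝ),
      (y - γ • onesVec n - X *ᵥ β) ⬝ᵥ (Ω *ᵥ (y - γ • onesVec n - X *ᵥ β)) =
        s * (γ - s⁻¹ * (onesVec n ⬝ᵥ (Ω *ᵥ (y - X *ᵥ β))))^2 +
        (y - X *ᵥ β) ⬝ᵥ (D *ᵥ (y - X *ᵥ β)) := by
    intro γ β
    have h0 : y - γ • onesVec n - X *ᵥ β = (y - X *ᵥ β) - γ • onesVec n := by abel
    rw [h0, GLSaux.keyA hsym hs γ (y - X *ᵥ β), ← hsdef, ← hD]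
  have hmin : (y - gammaGLS Ω X y • onesVec n - X *ᵥ bh) ⬝ᵥ
      (Ω *ᵥ (y - gammaGLS Ω X y • onesVec n - X *ᵥ bh)) = rh ⬝ᵥ (D *ᵥ rh) := by
    rw [hobj, ← hr, ← hγ, hγ, sub_self]
    ring
  constructor
  · intro γ β
    rw [hmin, hobj γ β, hquad β]
    have h1 : 0 ≤ s * (γ - s⁻¹ * (onesVec n ⬝ᵥ (Ω *ᵥ (y - X *ᵥ β))))^2 :=
      mul_nonneg (le_of_lt hspos) (sq_nonneg _)
    have h2 : 0 ≤ (X *ᵥ (β - bh)) ⬝ᵥ (D *ᵥ (X *ᵥ (β - bh))) := by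
      rw [hD]
      exact GLSaux.centerMat_psd hΩ hsym hs _
    linarith
  · rw [hmin]
    have hBy : (D - D * X * M⁻¹ * Xᵀ * D) *ᵥ y = D *ᵥ rh := by
      have hβ' : bh = (M⁻¹ * Xᵀ * D) *ᵥ y := by
        rw [hβ, betaGLS, ← hD, ← hM, Matrix.mulVec_mulVec, Matrix.mul_assoc]
      rw [Matrix.sub_mulVec, hr, Matrix.mulVec_sub, hβ']
      congr 1
      simp only [Matrix.mulVec_mulVec, ← Matrix.mul_assoc]
    have hkey : rh ⬝ᵥ (D *ᵥ rh) = y ⬝ᵥ (D *ᵥ rh) := by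
      nth_rewrite 1 [hr]
      rw [sub_dotProduct, GLSaux.mulVec_dot, hnormal, dotProduct_zero, sub_zero]
    rw [hkey, ← hBy]
end

section
/- Let D be a real symmetric positive semidefinite n×n matrix, X a real n×p matrix such that XᵀDX is positive definite, R a real r×p matrix of full row rank, and c ∈ ℝ^r, y ∈ ℝⁿ. With β̂ = (XᵀDX)⁻¹XᵀDy and β_R = β̂ − (XᵀDX)⁻¹ Rᵀ ( R (XᵀDX)⁻¹ Rᵀ )⁻¹ (Rβ̂ − c), the following identity holds: (y − Xβ_R)ᵀ D (y − Xβ_R) = yᵀ ( D − D X (XᵀDX)⁻¹ Xᵀ D ) y + (Rβ̂ − c)ᵀ ( R (XᵀDX)⁻¹ Rᵀ )⁻¹ (Rβ̂ − c). -/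
open Matrix

/-- The (unrestricted) weighted least-squares estimator `β̂ = (XᵀDX)⁻¹XᵀDy`. -/
noncomputable def betaHat {n p : ℕ} (D : Matrix (Fin n) (Fin n) ℝ)
    (X : Matrix (Fin n) (Fin p) ℝ) (y : Fin n → ℝ) : Fin p → ℝ :=
  (Xᵀ * D * X)⁻¹ *ᵥ ((Xᵀ * D) *ᵥ y)

/-- The restricted estimator
`β_R = β̂ - (XᵀDX)⁻¹Rᵀ(R(XᵀDX)⁻¹Rᵀ)⁻¹(Rβ̂ - c)`. -/
noncomputable def betaRestricted {n p r : ℕ} (D : Matrix (Fin n) (Fin n) ℝ)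
    (X : Matrix (Fin n) (Fin p) ℝ) (R : Matrix (Fin r) (Fin p) ℝ)
    (c : Fin r → ℝ) (y : Fin n → ℝ) : Fin p → ℝ :=
  betaHat D X y -
    ((Xᵀ * D * X)⁻¹ * Rᵀ * (R * (Xᵀ * D * X)⁻¹ * Rᵀ)⁻¹) *ᵥ
      (R *ᵥ betaHat D X y - c)

/-- Decomposition of the restricted residual sum of squares:
`(y - Xβ_R)ᵀD(y - Xβ_R) = yᵀ(D - DX(XᵀDX)⁻¹XᵀD)y + (Rβ̂ - c)ᵀ(R(XᵀDX)⁻¹Rᵀ)⁻¹(Rβ̂ - c)`. -/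
theorem restricted_ls_decomposition {n p r : ℕ}
    {D : Matrix (Fin n) (Fin n) ℝ} (hD : D.PosSemidef)
    (X : Matrix (Fin n) (Fin p) ℝ) (hX : (Xᵀ * D * X).PosDef)
    (R : Matrix (Fin r) (Fin p) ℝ) (hR : ∀ u : Fin r → ℝ, u ᵥ* R = 0 → u = 0)
    (c : Fin r → ℝ) (y : Fin n → ℝ) :
    (y - X *ᵥ betaRestricted D X R c y) ⬝ᵥ (D *ᵥ (y - X *ᵥ betaRestricted D X R c y)) =
      y ⬝ᵥ ((D - D * X * (Xᵀ * D * X)⁻¹ * Xᵀ * D) *ᵥ y) +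
      (R *ᵥ betaHat D X y - c) ⬝ᵥ
        ((R * (Xᵀ * D * X)⁻¹ * Rᵀ)⁻¹ *ᵥ (R *ᵥ betaHat D X y - c)) := by
  have hDT : Dᵀ = D := by
    rw [← conjTranspose_eq_transpose_of_trivial]; exact hD.isHermitian
  simp only [betaRestricted, betaHat]
  set A := Xᵀ * D * X with hA
  haveI : Invertible A := hX.isUnit.invertible
  have hAinv : A⁻¹.PosDef := hX.inv
  have hAinvT : A⁻¹ᵀ = A⁻¹ := by
    rw [← conjTranspose_eq_transpose_of_trivial]; exact hAinv.isHermitian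
  set S := R * A⁻¹ * Rᵀ with hS
  have hSpd : S.PosDef := by
    rw [posDef_iff_dotProduct_mulVec]
    constructor
    · rw [IsHermitian, conjTranspose_eq_transpose_of_trivial, hS,
        transpose_mul, transpose_mul, transpose_transpose, hAinvT, Matrix.mul_assoc]
    · intro x hx
      have hx' : x ᵥ* R ≠ 0 := fun h => hx (hR x h)
      have h2 := hAinv.dotProduct_mulVec_pos (x := Rᵀ *ᵥ x) (by rwa [mulVec_transpose])
      simp only [star_trivial, mulVec_transpose] at h2
      rw [dotProduct_mulVec] at h2
      simp only [star_trivial]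
      rw [hS, ← mulVec_mulVec, dotProduct_mulVec, ← vecMul_vecMul, mulVec_transpose]
      exact h2
  haveI : Invertible S := hSpd.isUnit.invertible
  have hST : Sᵀ = S := by
    rw [← conjTranspose_eq_transpose_of_trivial]; exact hSpd.isHermitian
  have hSinvT : S⁻¹ᵀ = S⁻¹ := by rw [transpose_nonsing_inv, hST]
  -- generic re-grouping lemma
  have hXDX : ∀ {q : ℕ} (M : Matrix (Fin p) (Fin q) ℝ),
      Xᵀ * (D * (X * M)) = A * M := by
    intro q M; rw [hA]; simp only [Matrix.mul_assoc]
  -- dot product transfer lemma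
  have hdot : ∀ {a b : ℕ} (N : Matrix (Fin a) (Fin b) ℝ) (u : Fin b → ℝ) (w : Fin a → ℝ),
      (N *ᵥ u) ⬝ᵥ w = u ⬝ᵥ (Nᵀ *ᵥ w) := by
    intro a b N u w
    rw [dotProduct_comm, dotProduct_mulVec, dotProduct_comm, ← mulVec_transpose]
  set b := A⁻¹ *ᵥ ((Xᵀ * D) *ᵥ y) with hb
  set d := R *ᵥ b - c with hd
  set T := A⁻¹ * Rᵀ * S⁻¹ with hT
  set e := y - X *ᵥ b with he
  set v := T *ᵥ d with hv
  have hsplit : y - X *ᵥ (b - v) = e + X *ᵥ v := by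
    rw [mulVec_sub, he]; abel
  have h0 : (Xᵀ * D) *ᵥ e = 0 := by
    rw [he, mulVec_sub, hb, mulVec_mulVec, mulVec_mulVec, ← hA,
      Matrix.mul_inv_of_invertible, one_mulVec, sub_self]
  -- cross term 1
  have hc1 : e ⬝ᵥ (D *ᵥ (X *ᵥ v)) = 0 := by
    rw [mulVec_mulVec, dotProduct_mulVec, ← mulVec_transpose, transpose_mul, hDT, h0,
      zero_dotProduct]
  -- symmetry of D-form
  have hsym : ∀ (a b : Fin n → ℝ), a ⬝ᵥ (D *ᵥ b) = b ⬝ᵥ (D *ᵥ a) := by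
    intro a b
    rw [dotProduct_mulVec, ← hDT, vecMul_transpose, dotProduct_comm, hDT]
  have hc2 : (X *ᵥ v) ⬝ᵥ (D *ᵥ e) = 0 := by rw [hsym, hc1]
  -- fourth term
  have hM4 : (X * T)ᵀ * (D * (X * T)) = S⁻¹ := by
    have hTT : Tᵀ = S⁻¹ * (R * A⁻¹) := by
      rw [hT, transpose_mul, transpose_mul, transpose_transpose, hAinvT, hSinvT]
    rw [transpose_mul, hTT]
    simp only [Matrix.mul_assoc, hT]
    rw [hXDX, Matrix.mul_inv_cancel_left_of_invertible]
    rw [show R * (A⁻¹ * (Rᵀ * S⁻¹)) = S * S⁻¹ by rw [hS]; simp only [Matrix.mul_assoc]]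
    rw [Matrix.inv_mul_cancel_left_of_invertible]
  have ht4 : (X *ᵥ v) ⬝ᵥ (D *ᵥ (X *ᵥ v)) = d ⬝ᵥ (S⁻¹ *ᵥ d) := by
    rw [hv, mulVec_mulVec, mulVec_mulVec, hdot, mulVec_mulVec, hM4]
  -- first term
  have hDe : D *ᵥ e = (D - D * X * (A⁻¹ * (Xᵀ * D))) *ᵥ y := by
    rw [he, mulVec_sub, hb, mulVec_mulVec, mulVec_mulVec, mulVec_mulVec, sub_mulVec,
      Matrix.mul_assoc]
  have hXM : Xᵀ * (D - D * X * (A⁻¹ * (Xᵀ * D))) = 0 := by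
    rw [Matrix.mul_sub]
    rw [show Xᵀ * (D * X * (A⁻¹ * (Xᵀ * D))) = Xᵀ * (D * (X * (A⁻¹ * (Xᵀ * D)))) by
      simp only [Matrix.mul_assoc]]
    rw [hXDX, Matrix.mul_inv_cancel_left_of_invertible, sub_self]
  have ht1 : e ⬝ᵥ (D *ᵥ e) = y ⬝ᵥ ((D - D * X * A⁻¹ * Xᵀ * D) *ᵥ y) := by
    rw [hDe, he, sub_dotProduct, hdot, Matrix.mulVec_mulVec, hXM, zero_mulVec,
      dotProduct_zero, sub_zero]
    congr 2
    simp only [Matrix.mul_assoc]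
  calc (y - X *ᵥ (b - v)) ⬝ᵥ (D *ᵥ (y - X *ᵥ (b - v)))
      = (e + X *ᵥ v) ⬝ᵥ (D *ᵥ e + D *ᵥ (X *ᵥ v)) := by rw [hsplit, mulVec_add]
    _ = e ⬝ᵥ (D *ᵥ e) + e ⬝ᵥ (D *ᵥ (X *ᵥ v)) + ((X *ᵥ v) ⬝ᵥ (D *ᵥ e)
          + (X *ᵥ v) ⬝ᵥ (D *ᵥ (X *ᵥ v))) := by
        rw [add_dotProduct, dotProduct_add, dotProduct_add]
    _ = y ⬝ᵥ ((D - D * X * A⁻¹ * Xᵀ * D) *ᵥ y) + d ⬝ᵥ (S⁻¹ *ᵥ d) := by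
        rw [hc1, hc2, ht1, ht4]; ring
end

section
/- Let (Ω, 𝓕, P) be a probability space and let X : Ω → ℝ^p and Z : Ω → ℝ^q be random vectors all of whose coordinates are square-integrable. Assume (i) the law of Z is absolutely continuous with respect to Lebesgue measure on ℝ^q, and (ii) for every nonzero u ∈ ℝ^p, Var(⟨u, X − E[X | σ(Z)]⟩) > 0, where E[X | σ(Z)] denotes the coordinatewise conditional expectation of X given the σ-algebra generated by Z. Then for every (u, v) ∈ ℝ^p × ℝ^q with (u, v) ≠ 0, Var(⟨u, X⟩ + ⟨v, Z⟩) > 0; that is, the covariance matrix of the stacked vector (Xᵀ, Zᵀ)ᵀ is positive definite. -/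
open MeasureTheory ProbabilityTheory

/-- If the law of `Z` is absolutely continuous w.r.t. Lebesgue measure on `ℝ^q` and the
conditional covariance of `X` given `Z` is nondegenerate (every nontrivial linear
combination of the coordinates of `X - E[X | σ(Z)]` has positive variance), then the
covariance matrix of the stacked vector `(Xᵀ, Zᵀ)ᵀ` is positive definite: every
nontrivial linear combination `⟨u, X⟩ + ⟨v, Z⟩` has positive variance. -/
theorem stacked_covariance_posDef
    {Ω : Type*} [MeasurableSpace Ω] (P : Measure Ω) [IsProbabilityMeasure P]
    {p q : ℕ} (X : Ω → Fin p → ℝ) (Z : Ω → Fin q → ℝ)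
    (hX : Measurable X) (hZ : Measurable Z)
    (hXL2 : ∀ i, MemLp (fun ω => X ω i) 2 P)
    (hZL2 : ∀ j, MemLp (fun ω => Z ω j) 2 P)
    (hac : (P.map Z).AbsolutelyContinuous (volume : Measure (Fin q → ℝ)))
    (hvar : ∀ u : Fin p → ℝ, u ≠ 0 →
      0 < variance (fun ω => ∑ i, u i *
        (X ω i - (P[(fun ω' => X ω' i) | MeasurableSpace.comap Z inferInstance]) ω)) P) :
    ∀ (u : Fin p → ℝ) (v : Fin q → ℝ), (u, v) ≠ 0 →
      0 < variance (fun ω => (∑ i, u i * X ω i) + ∑ j, v j * Z ω j) P := by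
  intro u v huv
  have hm : MeasurableSpace.comap Z inferInstance ≤ ‹MeasurableSpace Ω› := hZ.comap_le
  set W : Ω → ℝ := fun ω => (∑ i, u i * X ω i) + ∑ j, v j * Z ω j with hWdef
  have hXi : ∀ i, Measurable fun ω => X ω i := fun i => (measurable_pi_apply i).comp hX
  have hZj : ∀ j, Measurable fun ω => Z ω j := fun j => (measurable_pi_apply j).comp hZ
  have hWL2 : MemLp W 2 P := by
    apply MemLp.add
    · exact memLp_finset_sum Finset.univ fun i _ => (hXL2 i).const_mul (u i)
    · exact memLp_finset_sum Finset.univ fun j _ => (hZL2 j).const_mul (v j)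
  rcases (variance_nonneg W P).lt_or_eq with h | h
  · exact h
  exfalso
  -- variance zero ⇒ a.e. constant
  have hev : evariance W P = 0 := by
    have hlt := hWL2.evariance_lt_top
    rw [variance] at h
    rcases (ENNReal.toReal_eq_zero_iff _).mp h.symm with h0 | htop
    · exact h0
    · exact absurd htop hlt.ne
  have hWm : Measurable W := by
    apply Measurable.add
    · exact Finset.measurable_sum _ fun i _ => (measurable_const.mul (hXi i))
    · exact Finset.measurable_sum _ fun j _ => (measurable_const.mul (hZj j))
  have hWconst : W =ᵐ[P] fun _ => P[W] :=
    (evariance_eq_zero_iff hWm.aemeasurable).mp hev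
  set c : ℝ := ∫ ω, W ω ∂P with hcdef
  by_cases hu : u = 0
  · -- then v ≠ 0 and Z lands a.e. in a hyperplane
    have hv : v ≠ 0 := by
      intro hv; exact huv (by simp [hu, hv, Prod.ext_iff])
    obtain ⟨j0, hj0⟩ : ∃ j, v j ≠ 0 := by
      by_contra hc; push_neg at hc; exact hv (funext hc)
    -- the hyperplane
    set L : (Fin q → ℝ) →ₗ[ℝ] ℝ := ∑ j, v j • LinearMap.proj j with hLdef
    have hLapp : ∀ z, L z = ∑ j, v j * z j := by
      intro z; simp [hLdef, LinearMap.sum_apply]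
    set A : AffineSubspace ℝ (Fin q → ℝ) :=
      AffineSubspace.comap L.toAffineMap (AffineSubspace.mk' c (⊥ : Submodule ℝ ℝ)) with hAdef
    have hmemA : ∀ z, z ∈ A ↔ ∑ j, v j * z j = c := by
      intro z
      rw [hAdef, AffineSubspace.mem_comap, AffineSubspace.mem_mk']
      simp [hLapp z, sub_eq_zero]
    have hAne : A ≠ ⊤ := by
      intro htop
      have hz : (fun j => if j = j0 then (c + 1) / v j0 else 0) ∈ A := by
        rw [htop]; trivial
      rw [hmemA] at hz
      have : v j0 * ((c + 1) / v j0) = c := by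
        simpa [mul_ite, Finset.sum_ite_eq'] using hz
      rw [mul_div_cancel₀ _ hj0] at this
      linarith
    have hvol : (volume : Measure (Fin q → ℝ)) (A : Set (Fin q → ℝ)) = 0 :=
      Measure.addHaar_affineSubspace _ A hAne
    have hsA : {z : Fin q → ℝ | ∑ j, v j * z j = c} = (A : Set (Fin q → ℝ)) := by
      ext z; simpa using (hmemA z).symm
    have hs : MeasurableSet {z : Fin q → ℝ | ∑ j, v j * z j = c} := by
      have hfm : Measurable fun z : Fin q → ℝ => ∑ j, v j * z j :=
        Finset.measurable_sum _ fun j _ => measurable_const.mul (measurable_pi_apply j)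
      exact hfm (measurableSet_singleton c)
    have hmap0 : P (Z ⁻¹' {z | ∑ j, v j * z j = c}) = 0 := by
      rw [← Measure.map_apply hZ hs]
      exact hac (by rw [hsA]; exact hvol)
    have hae : ∀ᵐ ω ∂P, ω ∈ Z ⁻¹' {z | ∑ j, v j * z j = c} := by
      filter_upwards [hWconst] with ω hω
      have : (∑ i, u i * X ω i) = 0 := by simp [hu]
      simp only [Set.mem_preimage, Set.mem_setOf_eq]
      rw [← hω]; simp [hWdef, this]
    have hcompl : P (Z ⁻¹' {z | ∑ j, v j * z j = c})ᶜ = 0 := by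
      simpa [ae_iff, Set.compl_setOf] using hae
    have : (1 : ENNReal) ≤ 0 := by
      calc (1 : ENNReal) = P Set.univ := (measure_univ (μ := P)).symm
        _ = P ((Z ⁻¹' {z | ∑ j, v j * z j = c}) ∪ (Z ⁻¹' {z | ∑ j, v j * z j = c})ᶜ) := by
            rw [Set.union_compl_self]
        _ ≤ P (Z ⁻¹' {z | ∑ j, v j * z j = c}) + P (Z ⁻¹' {z | ∑ j, v j * z j = c})ᶜ :=
            measure_union_le _ _
        _ = 0 := by rw [hmap0, hcompl, add_zero]
    simp at this
  · -- u ≠ 0 : conditional variance degenerates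
    set g : Ω → ℝ := fun ω => c - ∑ j, v j * Z ω j with hgdef
    have hXconst : (fun ω => ∑ i, u i * X ω i) =ᵐ[P] g := by
      filter_upwards [hWconst] with ω hω
      simp only [hgdef]
      rw [← hω]
      simp [hWdef]
    have hZm : Measurable[MeasurableSpace.comap Z inferInstance] Z := fun s hs => ⟨s, hs, rfl⟩
    have hgm : Measurable[MeasurableSpace.comap Z inferInstance] g := by
      apply Measurable.sub measurable_const
      exact Finset.measurable_sum _ fun j _ =>
        Measurable.mul measurable_const ((measurable_pi_apply j).comp hZm)
    have hgint : Integrable g P := by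
      apply Integrable.sub (integrable_const c)
      exact integrable_finset_sum _ fun j _ => (((hZL2 j).integrable one_le_two).const_mul (v j))
    have hcond1 : P[(fun ω => ∑ i, u i * X ω i) | MeasurableSpace.comap Z inferInstance] =ᵐ[P] g := by
      refine (condExp_congr_ae hXconst).trans ?_
      rw [condExp_of_stronglyMeasurable hm hgm.stronglyMeasurable hgint]
    have hfe : (fun ω => ∑ i, u i * X ω i) = ∑ i, fun ω => u i * X ω i := by
      ext ω; simp
    have h1 : P[(fun ω => ∑ i, u i * X ω i) | MeasurableSpace.comap Z inferInstance]
        =ᵐ[P] ∑ i, P[(fun ω => u i * X ω i) | MeasurableSpace.comap Z inferInstance] := by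
      rw [hfe]
      exact condExp_finset_sum (fun i _ => ((hXL2 i).integrable one_le_two).const_mul (u i)) _
    have h2 : ∀ᵐ ω ∂P, ∀ i : Fin p, (P[(fun ω' => u i * X ω' i) | MeasurableSpace.comap Z inferInstance]) ω
        = u i * (P[(fun ω' => X ω' i) | MeasurableSpace.comap Z inferInstance]) ω := by
      rw [ae_all_iff]
      intro i
      have := condExp_smul (𝕜 := ℝ) (μ := P) (m := MeasurableSpace.comap Z inferInstance) (u i) (fun ω => X ω i)
      have hfun : (u i • fun ω => X ω i) = fun ω' => u i * X ω' i := by ext; simp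
      rw [hfun] at this
      filter_upwards [this] with ω hω
      simpa [smul_eq_mul] using hω
    have hcond2 : P[(fun ω => ∑ i, u i * X ω i) | MeasurableSpace.comap Z inferInstance]
        =ᵐ[P] fun ω => ∑ i, u i * (P[(fun ω' => X ω' i) | MeasurableSpace.comap Z inferInstance]) ω := by
      filter_upwards [h1, h2] with ω hω1 hω2
      rw [hω1]
      simp only [Finset.sum_apply]
      exact Finset.sum_congr rfl fun i _ => hω2 i
    set f : Ω → ℝ :=
      fun ω => ∑ i, u i * (X ω i - (P[(fun ω' => X ω' i) | MeasurableSpace.comap Z inferInstance]) ω) with hfdef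
    have hf0 : f =ᵐ[P] 0 := by
      filter_upwards [hXconst, hcond1, hcond2] with ω hω1 hω2 hω3
      have hE : (∑ i, u i * (P[(fun ω' => X ω' i) | MeasurableSpace.comap Z inferInstance]) ω) = g ω := by
        rw [← hω3, hω2]
      simp only [hfdef, Pi.zero_apply, mul_sub, Finset.sum_sub_distrib]
      rw [hω1, hE, sub_self]
    have hfmeas : Measurable f := by
      apply Finset.measurable_sum
      intro i _
      exact measurable_const.mul ((hXi i).sub (stronglyMeasurable_condExp.mono hm).measurable)
    have hmean : ∫ ω, f ω ∂P = 0 := by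
      rw [integral_congr_ae hf0]; simp
    have hfconst : f =ᵐ[P] fun _ => ∫ ω, f ω ∂P := by
      rw [hmean]; exact hf0
    have hev0 : evariance f P = 0 :=
      (evariance_eq_zero_iff hfmeas.aemeasurable).mpr hfconst
    have hv0 : variance f P = 0 := by rw [variance, hev0, ENNReal.toReal_zero]
    have := hvar u hu
    rw [hv0] at this
    exact lt_irrefl 0 this
end

section
/- Let m ≥ 1, let d ∈ ℝ^m have strictly positive entries, let μ be a probability measure on ℝ^m, and let h : ℝ^m → ℝ be μ-integrable. Then the double integral I = ∫_{ℝ^m} ∫_{ℝ^m} h(x) · h(y) · exp(−∑_{k=1}^m d_k (x_k − y_k)²) dμ(x) dμ(y) is well defined and satisfies I ≥ 0; moreover I = 0 if and only if h = 0 μ-almost everywhere. -/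
open MeasureTheory Complex Finset
open scoped Real

set_option linter.unusedSectionVars false

namespace SmoothMDAux

variable {m : ℕ}

/-- Gaussian weight in frequency space. -/
noncomputable def W (σ : Fin m → ℝ) (t : Fin m → ℝ) : ℝ :=
  Real.exp (-∑ k, (4 * σ k)⁻¹ * t k ^ 2)

lemma W_pos (σ t : Fin m → ℝ) : 0 < W σ t := Real.exp_pos _

lemma integrable_cexpW {σ : Fin m → ℝ} (hσ : ∀ k, 0 < σ k) (c : Fin m → ℂ) :
    Integrable (fun t : Fin m → ℝ =>
      Complex.exp (-∑ k, ((((4 * σ k)⁻¹ : ℝ)) : ℂ) * (t k : ℂ) ^ 2 + ∑ k, c k * t k)) := by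
  apply GaussianFourier.integrable_cexp_neg_sum_mul_add
  intro k
  have := hσ k
  simp only [Complex.ofReal_re]
  positivity

lemma W_cexp_eq {σ : Fin m → ℝ} (v t : Fin m → ℝ) :
    (W σ t : ℂ) * Complex.exp (Complex.I * (∑ k, t k * v k : ℝ)) =
      Complex.exp (-∑ k, ((((4 * σ k)⁻¹ : ℝ)) : ℂ) * (t k : ℂ) ^ 2 +
        ∑ k, (Complex.I * v k) * t k) := by
  rw [W, Complex.ofReal_exp, ← Complex.exp_add]
  congr 1
  push_cast
  rw [Finset.mul_sum]
  congr 1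
  exact Finset.sum_congr rfl fun k _ => by ring

noncomputable def C (σ : Fin m → ℝ) : ℝ := ∫ t : Fin m → ℝ, W σ t

lemma integrable_W {σ : Fin m → ℝ} (hσ : ∀ k, 0 < σ k) : Integrable (W σ) := by
  have h0 := integrable_cexpW hσ (fun k => Complex.I * (0 : Fin m → ℝ) k)
  have h1 : Integrable (fun t : Fin m → ℝ => ((W σ t : ℝ) : ℂ)) := by
    refine h0.congr (Filter.Eventually.of_forall fun t => ?_)
    dsimp only
    rw [← W_cexp_eq (σ := σ) 0 t]
    simp
  simpa using h1.re

lemma C_pos {σ : Fin m → ℝ} (hσ : ∀ k, 0 < σ k) : 0 < C σ := by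
  have hsupp : Function.support (W σ) = Set.univ :=
    Set.eq_univ_of_forall fun t => (W_pos σ t).ne'
  rw [C, integral_pos_iff_support_of_nonneg (fun t => (W_pos σ t).le) (integrable_W hσ), hsupp]
  exact isOpen_univ.measure_pos volume ⟨0, trivial⟩

lemma gauss_rep {σ : Fin m → ℝ} (hσ : ∀ k, 0 < σ k) (v : Fin m → ℝ) :
    ∫ t : Fin m → ℝ, (W σ t : ℂ) * Complex.exp (Complex.I * (∑ k, t k * v k : ℝ)) =
      (C σ : ℂ) * Real.exp (-∑ k, σ k * v k ^ 2) := by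
  have hb : ∀ k, (0:ℝ) < (((4 * σ k)⁻¹ : ℝ) : ℂ).re := fun k => by
    have := hσ k; simp only [Complex.ofReal_re]; positivity
  have key := GaussianFourier.integral_cexp_neg_sum_mul_add hb (fun k => Complex.I * v k)
  have key0 := GaussianFourier.integral_cexp_neg_sum_mul_add hb (fun _ => (0:ℂ))
  have e1 : (∫ t : Fin m → ℝ, (W σ t : ℂ) * Complex.exp (Complex.I * (∑ k, t k * v k : ℝ))) =
      ∫ t : Fin m → ℝ, Complex.exp (-∑ k, ((((4 * σ k)⁻¹ : ℝ)) : ℂ) * (t k : ℂ) ^ 2 +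
        ∑ k, (Complex.I * v k) * t k) :=
    integral_congr_ae (Filter.Eventually.of_forall fun t => W_cexp_eq v t)
  have e0 : (C σ : ℂ) = ∏ k, (↑π / ((((4 * σ k)⁻¹ : ℝ)) : ℂ)) ^ (1/2 : ℂ) := by
    have eW : (C σ : ℂ) = ∫ t : Fin m → ℝ, ((W σ t : ℝ) : ℂ) := integral_ofReal.symm
    have e2 : (∫ t : Fin m → ℝ, ((W σ t : ℝ) : ℂ)) =
        ∫ t : Fin m → ℝ, Complex.exp (-∑ k, ((((4 * σ k)⁻¹ : ℝ)) : ℂ) * (t k : ℂ) ^ 2 +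
          ∑ k, ((0:ℂ)) * t k) := by
      refine integral_congr_ae (Filter.Eventually.of_forall fun t => ?_)
      dsimp only
      rw [W, Complex.ofReal_exp]
      congr 1
      push_cast
      simp
    rw [eW, e2]
    have := GaussianFourier.integral_cexp_neg_sum_mul_add hb (fun _ => (0:ℂ))
    rw [this]
    simp
  rw [e1, key, Finset.prod_mul_distrib, ← Complex.exp_sum, ← e0, Complex.ofReal_exp]
  congr 1
  push_cast
  rw [← Finset.sum_neg_distrib]
  congr 1
  refine Finset.sum_congr rfl fun k _ => ?_
  have hk : (σ k : ℂ) ≠ 0 := by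
    exact_mod_cast (hσ k).ne'
  have hI := Complex.I_sq
  field_simp
  rw [hI]
  ring

end SmoothMDAux

namespace SmoothMDAux

variable {m : ℕ}

/-- inner product (phase). -/
noncomputable def phase (t x : Fin m → ℝ) : ℝ := ∑ k, t k * x k

lemma phase_sub (t x y : Fin m → ℝ) : phase t (x - y) = phase t x - phase t y := by
  simp [phase, mul_sub, Finset.sum_sub_distrib]

lemma cexp_I_norm (r : ℝ) : ‖Complex.exp (Complex.I * r)‖ = 1 := by
  rw [mul_comm]
  exact Complex.norm_exp_ofReal_mul_I r

/-- the modulated function appearing in the Fourier transform of `h dμ`. -/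
noncomputable def phi (h : (Fin m → ℝ) → ℝ) (t x : Fin m → ℝ) : ℂ :=
  (h x : ℂ) * Complex.exp (Complex.I * (phase t x : ℝ))

lemma continuous_phase_pair :
    Continuous (fun p : ((Fin m → ℝ) × (Fin m → ℝ)) × (Fin m → ℝ) => phase p.2 p.1.1) := by
  unfold phase; fun_prop

lemma norm_phi (h : (Fin m → ℝ) → ℝ) (t x : Fin m → ℝ) : ‖phi h t x‖ = ‖h x‖ := by
  rw [phi, norm_mul, cexp_I_norm, mul_one, Complex.norm_real]

variable {μ : Measure (Fin m → ℝ)} [IsProbabilityMeasure μ] {h : (Fin m → ℝ) → ℝ}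

lemma aesm_phi (hInt : Integrable h μ) (t : Fin m → ℝ) :
    AEStronglyMeasurable (phi h t) μ := by
  refine (Complex.continuous_ofReal.comp_aestronglyMeasurable hInt.1).mul
    (Continuous.aestronglyMeasurable ?_)
  unfold phase; fun_prop

lemma integrable_phi (hInt : Integrable h μ) (t : Fin m → ℝ) :
    Integrable (phi h t) μ := by
  refine Integrable.mono' hInt.norm (aesm_phi hInt t) ?_
  exact Filter.Eventually.of_forall fun x => le_of_eq (norm_phi h t x)

/-- Fourier transform of the signed measure `h dμ` (up to conventions). -/
noncomputable def hhat (μ : Measure (Fin m → ℝ)) (h : (Fin m → ℝ) → ℝ) (t : Fin m → ℝ) : ℂ :=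
  ∫ x, phi h t x ∂μ

end SmoothMDAux

namespace SmoothMDAux

variable {m : ℕ} {μ : Measure (Fin m → ℝ)} [IsProbabilityMeasure μ] {h : (Fin m → ℝ) → ℝ}
  {σ : Fin m → ℝ}

/-- The big integrand on `(Ω × Ω) × Ω`. -/
noncomputable def F (h : (Fin m → ℝ) → ℝ) (σ : Fin m → ℝ)
    (p : ((Fin m → ℝ) × (Fin m → ℝ)) × (Fin m → ℝ)) : ℂ :=
  (phi h p.2 p.1.1 * (starRingEnd ℂ) (phi h p.2 p.1.2)) * (W σ p.2 : ℂ)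

lemma bigInt (hσ : ∀ k, 0 < σ k) (hInt : Integrable h μ) :
    Integrable (F h σ) ((μ.prod μ).prod volume) := by
  have hg : Integrable (fun p : ((Fin m → ℝ) × (Fin m → ℝ)) × (Fin m → ℝ) =>
      (‖h p.1.1‖ * ‖h p.1.2‖) * W σ p.2) ((μ.prod μ).prod volume) :=
    (hInt.norm.mul_prod hInt.norm).mul_prod (integrable_W hσ)
  refine Integrable.mono' hg ?_ ?_
  · have a1 : AEStronglyMeasurable (fun p : ((Fin m → ℝ) × (Fin m → ℝ)) × (Fin m → ℝ) =>
        ((h p.1.1 : ℂ))) ((μ.prod μ).prod volume) :=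
      ((Complex.continuous_ofReal.comp_aestronglyMeasurable hInt.1).comp_fst).comp_fst
    have a2 : AEStronglyMeasurable (fun p : ((Fin m → ℝ) × (Fin m → ℝ)) × (Fin m → ℝ) =>
        ((h p.1.2 : ℂ))) ((μ.prod μ).prod volume) :=
      ((Complex.continuous_ofReal.comp_aestronglyMeasurable hInt.1).comp_snd).comp_fst
    have c1 : Continuous (fun p : ((Fin m → ℝ) × (Fin m → ℝ)) × (Fin m → ℝ) =>
        Complex.exp (Complex.I * (phase p.2 p.1.1 : ℝ))) := by
      unfold phase; fun_prop
    have c2base : Continuous (fun p : ((Fin m → ℝ) × (Fin m → ℝ)) × (Fin m → ℝ) =>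
        Complex.exp (Complex.I * (phase p.2 p.1.2 : ℝ))) := by
      unfold phase; fun_prop
    have c2 : Continuous (fun p : ((Fin m → ℝ) × (Fin m → ℝ)) × (Fin m → ℝ) =>
        (starRingEnd ℂ) (Complex.exp (Complex.I * (phase p.2 p.1.2 : ℝ)))) :=
      continuous_star.comp c2base
    have c3 : Continuous (fun p : ((Fin m → ℝ) × (Fin m → ℝ)) × (Fin m → ℝ) =>
        ((W σ p.2 : ℝ) : ℂ)) := by
      unfold W; fun_prop
    exact (((a1.mul c1.aestronglyMeasurable).mul
      (a2.mul c2.aestronglyMeasurable)).mul c3.aestronglyMeasurable).congr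
      (Filter.Eventually.of_forall fun p => by
        simp only [F, phi, Pi.mul_apply, map_mul, Complex.conj_ofReal]; try ring)
  · refine Filter.Eventually.of_forall fun p => ?_
    have : ‖F h σ p‖ = (‖h p.1.1‖ * ‖h p.1.2‖) * W σ p.2 := by
      rw [F, norm_mul, norm_mul, norm_phi, RCLike.norm_conj, norm_phi, Complex.norm_real,
        Real.norm_eq_abs (W σ p.2), abs_of_pos (W_pos σ p.2)]
    exact le_of_eq this

lemma inner_t_eq (hInt : Integrable h μ) (hσ : ∀ k, 0 < σ k) (t : Fin m → ℝ) :
    (∫ z : (Fin m → ℝ) × (Fin m → ℝ), F h σ (z, t) ∂(μ.prod μ)) =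
      ((W σ t * Complex.normSq (hhat μ h t) : ℝ) : ℂ) := by
  have e1 : (∫ z : (Fin m → ℝ) × (Fin m → ℝ), F h σ (z, t) ∂(μ.prod μ)) =
      (∫ z : (Fin m → ℝ) × (Fin m → ℝ),
        phi h t z.1 * (starRingEnd ℂ) (phi h t z.2) ∂(μ.prod μ)) * (W σ t : ℂ) := by
    rw [← integral_mul_const]; rfl
  rw [e1, integral_prod_mul (phi h t) (fun y => (starRingEnd ℂ) (phi h t y)), integral_conj]
  rw [show (∫ x, phi h t x ∂μ) = hhat μ h t from rfl, Complex.mul_conj]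
  push_cast
  ring

lemma inner_z_eq (hInt : Integrable h μ) (hσ : ∀ k, 0 < σ k)
    (z : (Fin m → ℝ) × (Fin m → ℝ)) :
    (∫ t : Fin m → ℝ, F h σ (z, t)) =
      ((h z.1 * h z.2 * Real.exp (-∑ k, σ k * (z.1 k - z.2 k) ^ 2) : ℝ) : ℂ) * (C σ : ℂ) := by
  have e1 : ∀ t : Fin m → ℝ, F h σ (z, t) =
      ((h z.1 * h z.2 : ℝ) : ℂ) *
        ((W σ t : ℂ) * Complex.exp (Complex.I * (∑ k, t k * (z.1 - z.2) k : ℝ))) := by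
    intro t
    rw [F, phi, phi]
    have hconj : (starRingEnd ℂ) ((h z.2 : ℂ) * Complex.exp (Complex.I * (phase t z.2 : ℝ))) =
        (h z.2 : ℂ) * Complex.exp (-(Complex.I * (phase t z.2 : ℝ))) := by
      rw [map_mul, Complex.conj_ofReal, ← Complex.exp_conj]
      congr 2
      simp
    rw [hconj]
    have : (∑ k, t k * (z.1 - z.2) k : ℝ) = phase t z.1 - phase t z.2 := phase_sub t z.1 z.2
    rw [this]
    push_cast
    rw [mul_sub, Complex.exp_sub, Complex.exp_neg, div_eq_mul_inv]
    ring
  calc (∫ t : Fin m → ℝ, F h σ (z, t))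
      = ∫ t : Fin m → ℝ, ((h z.1 * h z.2 : ℝ) : ℂ) *
          ((W σ t : ℂ) * Complex.exp (Complex.I * (∑ k, t k * (z.1 - z.2) k : ℝ))) :=
        integral_congr_ae (Filter.Eventually.of_forall fun t => e1 t)
    _ = ((h z.1 * h z.2 : ℝ) : ℂ) * ∫ t : Fin m → ℝ,
          (W σ t : ℂ) * Complex.exp (Complex.I * (∑ k, t k * (z.1 - z.2) k : ℝ)) :=
        integral_const_mul _ _
    _ = ((h z.1 * h z.2 * Real.exp (-∑ k, σ k * (z.1 k - z.2 k) ^ 2) : ℝ) : ℂ) * (C σ : ℂ) := by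
        rw [gauss_rep hσ (z.1 - z.2)]
        have : (-∑ k, σ k * (z.1 - z.2) k ^ 2) = (-∑ k, σ k * (z.1 k - z.2 k) ^ 2) := by
          simp [Pi.sub_apply]
        rw [this]
        push_cast
        ring

end SmoothMDAux

namespace SmoothMDAux

variable {m : ℕ} {μ : Measure (Fin m → ℝ)} [IsProbabilityMeasure μ] {h : (Fin m → ℝ) → ℝ}
  {σ : Fin m → ℝ}

lemma key (hσ : ∀ k, 0 < σ k) (hInt : Integrable h μ) :
    C σ * (∫ z : (Fin m → ℝ) × (Fin m → ℝ),
        h z.1 * h z.2 * Real.exp (-∑ k, σ k * (z.1 k - z.2 k) ^ 2) ∂(μ.prod μ))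
      = (∫ t : Fin m → ℝ, W σ t * Complex.normSq (hhat μ h t)) ∧
    Integrable (fun t : Fin m → ℝ => W σ t * Complex.normSq (hhat μ h t)) := by
  have hbig := bigInt hσ hInt
  have hIntW' : Integrable (fun t : Fin m → ℝ =>
      ∫ z : (Fin m → ℝ) × (Fin m → ℝ), F h σ (z, t) ∂(μ.prod μ)) volume := by
    simpa using hbig.swap.integral_prod_left
  have hWn : Integrable (fun t : Fin m → ℝ => W σ t * Complex.normSq (hhat μ h t)) := by
    have e : (fun t : Fin m → ℝ => ∫ z : (Fin m → ℝ) × (Fin m → ℝ), F h σ (z, t) ∂(μ.prod μ)) =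
        fun t => ((W σ t * Complex.normSq (hhat μ h t) : ℝ) : ℂ) :=
      funext (inner_t_eq hInt hσ)
    rw [e] at hIntW'
    simpa using hIntW'.re
  refine ⟨?_, hWn⟩
  have main : ((C σ * ∫ z : (Fin m → ℝ) × (Fin m → ℝ),
      h z.1 * h z.2 * Real.exp (-∑ k, σ k * (z.1 k - z.2 k) ^ 2) ∂(μ.prod μ) : ℝ) : ℂ) =
      ((∫ t : Fin m → ℝ, W σ t * Complex.normSq (hhat μ h t) : ℝ) : ℂ) := by
    have cast1 : ((∫ z : (Fin m → ℝ) × (Fin m → ℝ),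
        h z.1 * h z.2 * Real.exp (-∑ k, σ k * (z.1 k - z.2 k) ^ 2) ∂(μ.prod μ) : ℝ) : ℂ) =
        ∫ z : (Fin m → ℝ) × (Fin m → ℝ),
          ((h z.1 * h z.2 * Real.exp (-∑ k, σ k * (z.1 k - z.2 k) ^ 2) : ℝ) : ℂ) ∂(μ.prod μ) :=
      integral_ofReal.symm
    have cast2 : ((∫ t : Fin m → ℝ, W σ t * Complex.normSq (hhat μ h t) : ℝ) : ℂ) =
        ∫ t : Fin m → ℝ, ((W σ t * Complex.normSq (hhat μ h t) : ℝ) : ℂ) :=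
      integral_ofReal.symm
    rw [Complex.ofReal_mul, mul_comm, cast1, cast2, ← integral_mul_const]
    calc (∫ z : (Fin m → ℝ) × (Fin m → ℝ),
          ((h z.1 * h z.2 * Real.exp (-∑ k, σ k * (z.1 k - z.2 k) ^ 2) : ℝ) : ℂ) * (C σ : ℂ)
            ∂(μ.prod μ))
        = ∫ z : (Fin m → ℝ) × (Fin m → ℝ), (∫ t : Fin m → ℝ, F h σ (z, t)) ∂(μ.prod μ) :=
          integral_congr_ae (Filter.Eventually.of_forall fun z => (inner_z_eq hInt hσ z).symm)
      _ = ∫ p : ((Fin m → ℝ) × (Fin m → ℝ)) × (Fin m → ℝ), F h σ p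
            ∂((μ.prod μ).prod volume) := by
          exact integral_integral (f := fun z t => F h σ (z, t)) hbig
      _ = ∫ t : Fin m → ℝ, ∫ z : (Fin m → ℝ) × (Fin m → ℝ), F h σ (z, t) ∂(μ.prod μ) :=
          integral_prod_symm _ hbig
      _ = ∫ t : Fin m → ℝ, ((W σ t * Complex.normSq (hhat μ h t) : ℝ) : ℂ) :=
          integral_congr_ae (Filter.Eventually.of_forall fun t => inner_t_eq hInt hσ t)
  exact_mod_cast main

end SmoothMDAux

namespace SmoothMDAux

variable {m : ℕ} {μ : Measure (Fin m → ℝ)} [IsProbabilityMeasure μ] {h : (Fin m → ℝ) → ℝ}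

lemma smooth_zero (hInt : Integrable h μ) (hhat0 : hhat μ h =ᵐ[(volume : Measure (Fin m → ℝ))] 0)
    {τ : ℝ} (hτ : 0 < τ) (u : Fin m → ℝ) :
    ∫ x, h x * Real.exp (-∑ k, τ * (x k - u k) ^ 2) ∂μ = 0 := by
  set σ : Fin m → ℝ := fun _ => τ with hσdef
  have hσ : ∀ k, 0 < σ k := fun _ => hτ
  set Fu : ((Fin m → ℝ) × (Fin m → ℝ)) → ℂ := fun q =>
    (h q.1 : ℂ) * ((W σ q.2 : ℂ) *
      Complex.exp (Complex.I * ((∑ k, q.2 k * (q.1 - u) k : ℝ)))) with hFu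
  -- integrability on the product
  have hbig : Integrable Fu (μ.prod volume) := by
    refine Integrable.mono' (hInt.norm.mul_prod (integrable_W hσ)) ?_ ?_
    · refine ((Complex.continuous_ofReal.comp_aestronglyMeasurable hInt.1).comp_fst).mul
        (Continuous.aestronglyMeasurable ?_)
      unfold W
      fun_prop
    · refine Filter.Eventually.of_forall fun q => le_of_eq ?_
      rw [hFu]
      simp only [norm_mul, cexp_I_norm, mul_one, Complex.norm_real, Real.norm_eq_abs,
        abs_of_pos (W_pos σ q.2)]
  -- inner integral over t
  have e2 : ∀ t : Fin m → ℝ, (∫ x, Fu (x, t) ∂μ) =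
      ((W σ t : ℂ) * Complex.exp (-(Complex.I * (phase t u : ℝ)))) * hhat μ h t := by
    intro t
    have e3 : ∀ x, Fu (x, t) =
        ((W σ t : ℂ) * Complex.exp (-(Complex.I * (phase t u : ℝ)))) * phi h t x := by
      intro x
      simp only [hFu, phi]
      have : (∑ k, t k * (x - u) k : ℝ) = phase t x - phase t u := phase_sub t x u
      rw [this]
      push_cast
      rw [mul_sub, Complex.exp_sub, Complex.exp_neg, div_eq_mul_inv]
      ring
    rw [integral_congr_ae (Filter.Eventually.of_forall e3), integral_const_mul]
    rfl
  -- full computation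
  have main : ((∫ x, h x * Real.exp (-∑ k, τ * (x k - u k) ^ 2) ∂μ : ℝ) : ℂ) * (C σ : ℂ) = 0 := by
    have cast1 : ((∫ x, h x * Real.exp (-∑ k, τ * (x k - u k) ^ 2) ∂μ : ℝ) : ℂ) =
        ∫ x, ((h x * Real.exp (-∑ k, τ * (x k - u k) ^ 2) : ℝ) : ℂ) ∂μ := integral_ofReal.symm
    rw [cast1, ← integral_mul_const]
    have e1 : ∀ x : Fin m → ℝ,
        ((h x * Real.exp (-∑ k, τ * (x k - u k) ^ 2) : ℝ) : ℂ) * (C σ : ℂ) =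
          ∫ t : Fin m → ℝ, Fu (x, t) := by
      intro x
      have := gauss_rep hσ (x - u)
      calc ((h x * Real.exp (-∑ k, τ * (x k - u k) ^ 2) : ℝ) : ℂ) * (C σ : ℂ)
          = (h x : ℂ) * ((C σ : ℂ) * (Real.exp (-∑ k, σ k * (x - u) k ^ 2) : ℝ)) := by
            have : (-∑ k, σ k * (x - u) k ^ 2) = (-∑ k, τ * (x k - u k) ^ 2) := by
              simp [hσdef, Pi.sub_apply]
            rw [this]
            push_cast
            ring
        _ = (h x : ℂ) * ∫ t : Fin m → ℝ,
              (W σ t : ℂ) * Complex.exp (Complex.I * ((∑ k, t k * (x - u) k : ℝ))) := by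
            rw [gauss_rep hσ (x - u)]
        _ = ∫ t : Fin m → ℝ, Fu (x, t) := (integral_const_mul _ _).symm
    calc (∫ x, ((h x * Real.exp (-∑ k, τ * (x k - u k) ^ 2) : ℝ) : ℂ) * (C σ : ℂ) ∂μ)
        = ∫ x, (∫ t : Fin m → ℝ, Fu (x, t)) ∂μ :=
          integral_congr_ae (Filter.Eventually.of_forall e1)
      _ = ∫ q : (Fin m → ℝ) × (Fin m → ℝ), Fu q ∂(μ.prod volume) :=
          integral_integral (f := fun x t => Fu (x, t)) hbig
      _ = ∫ t : Fin m → ℝ, (∫ x, Fu (x, t) ∂μ) := integral_prod_symm _ hbig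
      _ = 0 := by
          rw [integral_congr_ae (g := fun _ => (0 : ℂ))
            (hhat0.mono fun t ht => by rw [e2 t, ht]; simp), integral_zero]
  have hC : (C σ : ℂ) ≠ 0 := by
    exact_mod_cast (C_pos hσ).ne'
  have := mul_eq_zero.mp main
  rcases this with h0 | h0
  · exact_mod_cast h0
  · exact absurd h0 hC

end SmoothMDAux

namespace SmoothMDAux

variable {m : ℕ} {μ : Measure (Fin m → ℝ)} [IsProbabilityMeasure μ] {h : (Fin m → ℝ) → ℝ}

/-- standard Gaussian-type weight -/
noncomputable def E (τ : ℝ) (v : Fin m → ℝ) : ℝ := Real.exp (-∑ k, τ * v k ^ 2)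

lemma E_pos (τ : ℝ) (v : Fin m → ℝ) : 0 < E τ v := Real.exp_pos _

lemma E_eq_W {τ : ℝ} (hτ : 0 < τ) : (E τ : (Fin m → ℝ) → ℝ) = W (fun _ => (4 * τ)⁻¹) := by
  funext v
  rw [E, W]
  congr 1
  rw [neg_inj]
  refine Finset.sum_congr rfl fun k _ => ?_
  have h4 : ((4 : ℝ) * (4 * τ)⁻¹)⁻¹ = τ := by field_simp
  rw [h4]

lemma integrable_E {τ : ℝ} (hτ : 0 < τ) : Integrable (E (m := m) τ) := by
  rw [E_eq_W hτ]
  exact integrable_W fun k => by positivity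

lemma E_integral_pos {τ : ℝ} (hτ : 0 < τ) : 0 < ∫ v : Fin m → ℝ, E τ v := by
  rw [E_eq_W hτ]
  exact C_pos fun k => by positivity

lemma test_zero (hInt : Integrable h μ)
    (hsm : ∀ τ : ℝ, 0 < τ → ∀ u : Fin m → ℝ,
      ∫ x, h x * Real.exp (-∑ k, τ * (x k - u k) ^ 2) ∂μ = 0)
    (f : BoundedContinuousFunction (Fin m → ℝ) ℝ) :
    ∫ x, h x * f x ∂μ = 0 := by
  set K0 : ℝ := ∫ v : Fin m → ℝ, E 1 v with hK0def
  have hK0 : 0 < K0 := E_integral_pos one_pos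
  -- the mollified test functions
  set gbar : ℕ → (Fin m → ℝ) → ℝ := fun n x =>
    K0⁻¹ * ∫ v : Fin m → ℝ, f (x - ((n : ℝ) + 1)⁻¹ • v) * E 1 v with hgbar
  have hc : ∀ n : ℕ, (0:ℝ) < ((n : ℝ) + 1)⁻¹ := fun n => by positivity
  -- integrability of the v-integrand
  have hvInt : ∀ (n : ℕ) (x : Fin m → ℝ),
      Integrable (fun v : Fin m → ℝ => f (x - ((n : ℝ) + 1)⁻¹ • v) * E 1 v) := by
    intro n x
    refine Integrable.mono' ((integrable_E (m := m) one_pos).const_mul ‖f‖)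
      (Continuous.aestronglyMeasurable ?_) (Filter.Eventually.of_forall fun v => ?_)
    · exact (f.continuous.comp (by fun_prop)).mul (by unfold E; fun_prop)
    · rw [norm_mul, Real.norm_eq_abs (E 1 v), abs_of_pos (E_pos 1 v)]
      exact mul_le_mul_of_nonneg_right (f.norm_coe_le_norm _) (E_pos 1 v).le
  -- uniform bound on gbar
  have hgbar_le : ∀ n x, |gbar n x| ≤ ‖f‖ := by
    intro n x
    rw [hgbar]
    have h1 : |∫ v : Fin m → ℝ, f (x - ((n : ℝ) + 1)⁻¹ • v) * E 1 v| ≤ ‖f‖ * K0 := by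
      rw [← Real.norm_eq_abs]
      refine (norm_integral_le_integral_norm _).trans ?_
      rw [hK0def, ← integral_const_mul]
      refine integral_mono (hvInt n x).norm ((integrable_E one_pos).const_mul ‖f‖) fun v => ?_
      rw [norm_mul, Real.norm_eq_abs (E 1 v), abs_of_pos (E_pos 1 v)]
      exact mul_le_mul_of_nonneg_right (f.norm_coe_le_norm _) (E_pos 1 v).le
    rw [abs_mul, abs_of_pos (inv_pos.mpr hK0)]
    calc K0⁻¹ * |∫ v : Fin m → ℝ, f (x - ((n : ℝ) + 1)⁻¹ • v) * E 1 v|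
        ≤ K0⁻¹ * (‖f‖ * K0) := mul_le_mul_of_nonneg_left h1 (inv_pos.mpr hK0).le
      _ = ‖f‖ := by field_simp
  -- change of variables
  have hCOV : ∀ (n : ℕ) (x : Fin m → ℝ),
      (∫ v : Fin m → ℝ, f (x - ((n : ℝ) + 1)⁻¹ • v) * E 1 v) =
        |((((n : ℝ) + 1)⁻¹) ^ Module.finrank ℝ (Fin m → ℝ))⁻¹| *
          ∫ u : Fin m → ℝ, f u * Real.exp (-∑ k, ((n : ℝ) + 1) ^ 2 * (x k - u k) ^ 2) := by
    intro n x
    set c : ℝ := ((n : ℝ) + 1)⁻¹ with hcdef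
    have hcne : c ≠ 0 := (hc n).ne'
    set g : (Fin m → ℝ) → ℝ := fun w => f (x - w) * Real.exp (-∑ k, ((n : ℝ) + 1) ^ 2 * w k ^ 2)
      with hgdef
    have e1 : (fun v : Fin m → ℝ => f (x - c • v) * E 1 v) = fun v => g (c • v) := by
      funext v
      rw [hgdef, E]
      congr 2
      rw [neg_inj]
      refine Finset.sum_congr rfl fun k _ => ?_
      rw [Pi.smul_apply, smul_eq_mul, mul_pow, ← mul_assoc]
      have : ((n : ℝ) + 1) ^ 2 * c ^ 2 = 1 := by
        rw [hcdef]
        field_simp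
      rw [this]
    rw [e1, MeasureTheory.Measure.integral_comp_smul volume g c, smul_eq_mul]
    congr 1
    have e2 : (fun w : Fin m → ℝ => g w) = fun w =>
        (fun u : Fin m → ℝ => f u * Real.exp (-∑ k, ((n : ℝ) + 1) ^ 2 * (x k - u k) ^ 2))
          (x - w) := by
      funext w
      simp only [hgdef]
      have e2a : ∀ k : Fin m, x k - (x - w) k = w k := fun k => by
        rw [Pi.sub_apply]; ring
      simp only [e2a]
    rw [e2]
    exact (integral_sub_left_eq_self
      (fun u : Fin m → ℝ => f u * Real.exp (-∑ k, ((n : ℝ) + 1) ^ 2 * (x k - u k) ^ 2))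
      volume x)
  -- each smoothed pairing vanishes
  have hpair : ∀ n : ℕ, ∫ x, h x * gbar n x ∂μ = 0 := by
    intro n
    set τ : ℝ := ((n : ℝ) + 1) ^ 2 with hτdef
    have hτ : 0 < τ := by positivity
    set cst : ℝ := |((((n : ℝ) + 1)⁻¹) ^ Module.finrank ℝ (Fin m → ℝ))⁻¹| with hcst
    -- double integral vanishes
    have hdouble : ∫ x, h x * (∫ u : Fin m → ℝ, f u *
        Real.exp (-∑ k, τ * (x k - u k) ^ 2)) ∂μ = 0 := by
      set Eτ : (Fin m → ℝ) → ℝ := E τ with hEτ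
      have hKτ : Integrable Eτ := integrable_E hτ
      set G : (Fin m → ℝ) × (Fin m → ℝ) → ℝ := fun q =>
        h q.1 * (f q.2 * Real.exp (-∑ k, τ * (q.1 k - q.2 k) ^ 2)) with hG
      have hGaesm : AEStronglyMeasurable G (μ.prod volume) := by
        refine (hInt.1.comp_fst).mul (Continuous.aestronglyMeasurable ?_)
        exact (f.continuous.comp continuous_snd).mul (by fun_prop)
      have hsub : ∀ x u : Fin m → ℝ,
          Real.exp (-∑ k, τ * (x k - u k) ^ 2) = Eτ (x - u) := by
        intro x u
        rw [hEτ, E]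
        congr 1
      have hslice : ∀ x : Fin m → ℝ, Integrable (fun u => G (x, u)) volume := by
        intro x
        refine Integrable.const_mul ?_ (h x)
        refine Integrable.mono' ((hKτ.comp_sub_left x).const_mul ‖f‖)
          (Continuous.aestronglyMeasurable ?_) (Filter.Eventually.of_forall fun u => ?_)
        · exact f.continuous.mul (by fun_prop)
        · rw [norm_mul, hsub x u, Real.norm_eq_abs (Eτ (x - u)),
            abs_of_pos (E_pos τ (x - u))]
          exact mul_le_mul_of_nonneg_right (f.norm_coe_le_norm _) (E_pos τ (x - u)).le
      have e3 : ∀ (x u : Fin m → ℝ), ‖G (x, u)‖ ≤ (|h x| * ‖f‖) * Eτ (x - u) := by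
        intro x u
        rw [hG]
        simp only [norm_mul, Real.norm_eq_abs]
        rw [hsub x u, abs_of_pos (E_pos τ (x - u))]
        calc |h x| * (|f u| * Eτ (x - u)) ≤ |h x| * (‖f‖ * Eτ (x - u)) := by
              refine mul_le_mul_of_nonneg_left ?_ (abs_nonneg _)
              exact mul_le_mul_of_nonneg_right (f.norm_coe_le_norm u) (E_pos τ _).le
          _ = |h x| * ‖f‖ * Eτ (x - u) := by ring
      have hGint : Integrable G (μ.prod volume) := by
        rw [integrable_prod_iff hGaesm]
        refine ⟨Filter.Eventually.of_forall hslice, ?_⟩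
        refine Integrable.mono' (hInt.norm.mul_const (‖f‖ * ∫ v : Fin m → ℝ, Eτ v))
          hGaesm.norm.integral_prod_right' ?_
        refine Filter.Eventually.of_forall fun x => ?_
        rw [Real.norm_eq_abs, _root_.abs_of_nonneg (integral_nonneg fun u => norm_nonneg _)]
        calc (∫ u : Fin m → ℝ, ‖G (x, u)‖)
            ≤ ∫ u : Fin m → ℝ, (|h x| * ‖f‖) * Eτ (x - u) :=
              integral_mono (hslice x).norm ((hKτ.comp_sub_left x).const_mul _) (e3 x)
          _ = ‖h x‖ * (‖f‖ * ∫ v : Fin m → ℝ, Eτ v) := by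
              rw [integral_const_mul (|h x| * ‖f‖) (fun u : Fin m → ℝ => Eτ (x - u)),
                integral_sub_left_eq_self Eτ volume x, Real.norm_eq_abs]
              ring
      calc ∫ x, h x * (∫ u : Fin m → ℝ, f u * Real.exp (-∑ k, τ * (x k - u k) ^ 2)) ∂μ
          = ∫ x, (∫ u : Fin m → ℝ, G (x, u)) ∂μ := by
            refine integral_congr_ae (Filter.Eventually.of_forall fun x => ?_)
            exact (integral_const_mul (h x)
              (fun u : Fin m → ℝ => f u * Real.exp (-∑ k, τ * (x k - u k) ^ 2))).symm
        _ = ∫ q : (Fin m → ℝ) × (Fin m → ℝ), G q ∂(μ.prod volume) :=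
            integral_integral (f := fun x u => G (x, u)) hGint
        _ = ∫ u : Fin m → ℝ, (∫ x, G (x, u) ∂μ) := integral_prod_symm _ hGint
        _ = 0 := by
            have e4 : ∀ u : Fin m → ℝ, (∫ x, G (x, u) ∂μ) = 0 := by
              intro u
              have e5 : ∀ x, G (x, u) = f u * (h x * Real.exp (-∑ k, τ * (x k - u k) ^ 2)) := by
                intro x; rw [hG]; ring
              rw [integral_congr_ae (Filter.Eventually.of_forall e5), integral_const_mul,
                hsm τ hτ u, mul_zero]
            rw [integral_congr_ae (Filter.Eventually.of_forall e4), integral_zero]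
    -- rewrite pairing with gbar via COV
    have e6 : ∀ x, h x * gbar n x = (K0⁻¹ * cst) * (h x * (∫ u : Fin m → ℝ, f u *
        Real.exp (-∑ k, τ * (x k - u k) ^ 2))) := by
      intro x
      rw [hgbar]
      dsimp only
      rw [hCOV n x, ← hcst, ← hτdef]
      ring
    rw [integral_congr_ae (Filter.Eventually.of_forall e6), integral_const_mul, hdouble, mul_zero]
  -- limit
  have hlim : ∀ x, Filter.Tendsto (fun n => gbar n x) Filter.atTop (nhds (f x)) := by
    intro x
    have h1 : Filter.Tendsto (fun n : ℕ => ((n : ℝ) + 1)⁻¹) Filter.atTop (nhds 0) := by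
      simpa using tendsto_one_div_add_atTop_nhds_zero_nat (𝕜 := ℝ)
    have h2 : Filter.Tendsto (fun n : ℕ => ∫ v : Fin m → ℝ, f (x - ((n : ℝ) + 1)⁻¹ • v) * E 1 v)
        Filter.atTop (nhds (∫ v : Fin m → ℝ, f x * E 1 v)) := by
      refine tendsto_integral_of_dominated_convergence (fun v => ‖f‖ * E 1 v)
        (fun n => (Continuous.aestronglyMeasurable ?_)) ((integrable_E one_pos).const_mul ‖f‖)
        (fun n => Filter.Eventually.of_forall fun v => ?_)
        (Filter.Eventually.of_forall fun v => ?_)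
      · exact (f.continuous.comp (by fun_prop)).mul (by unfold E; fun_prop)
      · rw [norm_mul, Real.norm_eq_abs (E 1 v), abs_of_pos (E_pos 1 v)]
        exact mul_le_mul_of_nonneg_right (f.norm_coe_le_norm _) (E_pos 1 v).le
      · refine Filter.Tendsto.mul ?_ tendsto_const_nhds
        have h3 : Filter.Tendsto (fun n : ℕ => x - ((n : ℝ) + 1)⁻¹ • v) Filter.atTop
            (nhds x) := by
          have := (h1.smul_const v).const_sub x
          simpa using this
        exact (f.continuous.tendsto x).comp h3
    have h4 : (∫ v : Fin m → ℝ, f x * E 1 v) = f x * K0 := by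
      rw [integral_const_mul, hK0def]
    rw [h4] at h2
    have h5 := h2.const_mul K0⁻¹
    have : K0⁻¹ * (f x * K0) = f x := by field_simp
    rw [this] at h5
    exact h5
  -- conclude by dominated convergence
  have hfinal : Filter.Tendsto (fun n => ∫ x, h x * gbar n x ∂μ) Filter.atTop
      (nhds (∫ x, h x * f x ∂μ)) := by
    refine tendsto_integral_of_dominated_convergence (fun x => |h x| * ‖f‖)
      (fun n => hInt.1.mul ?_) (hInt.abs.mul_const ‖f‖)
      (fun n => Filter.Eventually.of_forall fun x => ?_)
      (Filter.Eventually.of_forall fun x => ?_)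
    · rw [hgbar]
      refine AEStronglyMeasurable.const_mul ?_ _
      refine AEStronglyMeasurable.integral_prod_right' (f := fun p : (Fin m → ℝ) × (Fin m → ℝ)
        => f (p.1 - ((n : ℝ) + 1)⁻¹ • p.2) * E 1 p.2) ?_
      exact Continuous.aestronglyMeasurable
        ((f.continuous.comp (by fun_prop)).mul (by unfold E; fun_prop))
    · rw [norm_mul, Real.norm_eq_abs (h x), Real.norm_eq_abs (gbar n x)]
      exact mul_le_mul_of_nonneg_left (hgbar_le n x) (abs_nonneg _)
    · exact (hlim x).const_mul (h x)
  have h0 : Filter.Tendsto (fun n : ℕ => ∫ x, h x * gbar n x ∂μ) Filter.atTop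
      (nhds (0 : ℝ)) := by
    simp only [hpair]
    exact tendsto_const_nhds
  exact tendsto_nhds_unique hfinal h0

end SmoothMDAux

namespace SmoothMDAux

variable {m : ℕ} {μ : Measure (Fin m → ℝ)} [IsProbabilityMeasure μ] {h : (Fin m → ℝ) → ℝ}

lemma lipschitz_nnreal_coe : LipschitzWith 1 ((↑) : NNReal → ℝ) :=
  LipschitzWith.of_dist_le_mul fun x y => by
    simp [NNReal.dist_eq, Real.dist_eq]

lemma h_ae_zero (hInt : Integrable h μ)
    (hz : ∀ f : BoundedContinuousFunction (Fin m → ℝ) ℝ, ∫ x, h x * f x ∂μ = 0) :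
    h =ᵐ[μ] 0 := by
  have hmeas1 : AEMeasurable (fun x => ENNReal.ofReal (h x)) μ :=
    hInt.1.aemeasurable.ennreal_ofReal
  have hmeas2 : AEMeasurable (fun x => ENNReal.ofReal (-h x)) μ :=
    hInt.neg.1.aemeasurable.ennreal_ofReal
  have hfin1 : (∫⁻ x, ENNReal.ofReal (h x) ∂μ) ≠ ⊤ := by
    refine ((lintegral_mono fun x => ?_).trans_lt hInt.2).ne
    rw [Real.enorm_eq_ofReal_abs]
    exact ENNReal.ofReal_le_ofReal (le_abs_self _)
  have hfin2 : (∫⁻ x, ENNReal.ofReal (-h x) ∂μ) ≠ ⊤ := by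
    refine ((lintegral_mono fun x => ?_).trans_lt hInt.2).ne
    rw [Real.enorm_eq_ofReal_abs]
    exact ENNReal.ofReal_le_ofReal (neg_le_abs _)
  have hν : μ.withDensity (fun x => ENNReal.ofReal (h x)) =
      μ.withDensity (fun x => ENNReal.ofReal (-h x)) := by
    have : IsFiniteMeasure (μ.withDensity (fun x => ENNReal.ofReal (h x))) :=
      isFiniteMeasure_withDensity hfin1
    refine ext_of_forall_lintegral_eq_of_IsFiniteMeasure fun f => ?_
    set fr : BoundedContinuousFunction (Fin m → ℝ) ℝ :=
      BoundedContinuousFunction.comp _ lipschitz_nnreal_coe f with hfr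
    have hfrc : ∀ x, (fr x : ℝ) = ((f x : NNReal) : ℝ) := fun x => rfl
    have hfrnn : ∀ x, 0 ≤ fr x := fun x => by rw [hfrc]; exact (f x).coe_nonneg
    have hfmeas : AEMeasurable (fun x => ((f x : NNReal) : ENNReal)) μ :=
      (measurable_coe_nnreal_ennreal.comp (map_continuous f).measurable).aemeasurable
    -- convert both sides to real integrals
    have side : ∀ (g : (Fin m → ℝ) → ℝ), Integrable g μ →
        (∫⁻ x, ENNReal.ofReal (g x) * ((f x : NNReal) : ENNReal) ∂μ) =
          ENNReal.ofReal (∫ x, max (g x) 0 * fr x ∂μ) := by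
      intro g hg
      have hIntprod : Integrable (fun x => max (g x) 0 * fr x) μ := by
        refine Integrable.mono' (hg.pos_part.norm.mul_const ‖fr‖)
          (hg.pos_part.1.mul (map_continuous fr).aestronglyMeasurable)
          (Filter.Eventually.of_forall fun x => ?_)
        rw [norm_mul]
        exact mul_le_mul_of_nonneg_left (fr.norm_coe_le_norm x) (norm_nonneg _)
      rw [ofReal_integral_eq_lintegral_ofReal hIntprod
        (Filter.Eventually.of_forall fun x =>
          mul_nonneg (le_max_right _ _) (hfrnn x))]
      refine lintegral_congr_ae (Filter.Eventually.of_forall fun x => ?_)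
      dsimp only
      rw [ENNReal.ofReal_mul (le_max_right (g x) 0)]
      congr 1
      · rcases le_total (g x) 0 with hx | hx
        · rw [ENNReal.ofReal_of_nonpos hx, max_eq_right hx, ENNReal.ofReal_zero]
        · rw [max_eq_left hx]
      · rw [hfrc, ENNReal.ofReal_coe_nnreal]
    have w1 : (∫⁻ x, (f x : ENNReal) ∂(μ.withDensity (fun x => ENNReal.ofReal (h x)))) =
        ENNReal.ofReal (∫ x, max (h x) 0 * fr x ∂μ) := by
      rw [lintegral_withDensity_eq_lintegral_mul₀ hmeas1 hfmeas]
      exact side h hInt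
    have w2 : (∫⁻ x, (f x : ENNReal) ∂(μ.withDensity (fun x => ENNReal.ofReal (-h x)))) =
        ENNReal.ofReal (∫ x, max (-h x) 0 * fr x ∂μ) := by
      rw [lintegral_withDensity_eq_lintegral_mul₀ hmeas2 hfmeas]
      exact side (fun x => -h x) hInt.neg
    rw [w1, w2]
    congr 1
    -- the two real integrals agree since their difference is ∫ h * fr = 0
    have hIp : Integrable (fun x => max (h x) 0 * fr x) μ := by
      refine Integrable.mono' (hInt.pos_part.norm.mul_const ‖fr‖)
        (hInt.pos_part.1.mul (map_continuous fr).aestronglyMeasurable)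
        (Filter.Eventually.of_forall fun x => ?_)
      rw [norm_mul]
      exact mul_le_mul_of_nonneg_left (fr.norm_coe_le_norm x) (norm_nonneg _)
    have hIn : Integrable (fun x => max (-h x) 0 * fr x) μ := by
      refine Integrable.mono' (hInt.neg.pos_part.norm.mul_const ‖fr‖)
        (hInt.neg.pos_part.1.mul (map_continuous fr).aestronglyMeasurable)
        (Filter.Eventually.of_forall fun x => ?_)
      rw [norm_mul]
      exact mul_le_mul_of_nonneg_left (fr.norm_coe_le_norm x) (norm_nonneg _)
    have hdiff : (∫ x, max (h x) 0 * fr x ∂μ) - (∫ x, max (-h x) 0 * fr x ∂μ) = 0 := by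
      rw [← integral_sub hIp hIn]
      have : ∀ x, max (h x) 0 * fr x - max (-h x) 0 * fr x = h x * fr x := by
        intro x
        have hmax : max (h x) 0 - max (-h x) 0 = h x := by
          rcases le_total (h x) 0 with hx | hx
          · rw [max_eq_right hx, max_eq_left (by linarith)]; ring
          · rw [max_eq_left hx, max_eq_right (by linarith)]; ring
        rw [← sub_mul, hmax]
      rw [integral_congr_ae (Filter.Eventually.of_forall fun x => this x)]
      exact hz fr
    linarith [hdiff]
  have hae := (withDensity_eq_iff hmeas1 hmeas2 hfin1).mp hν
  refine hae.mono fun x hx0 => ?_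
  have hx : ENNReal.ofReal (h x) = ENNReal.ofReal (-h x) := hx0
  simp only [Pi.zero_apply]
  by_contra hne
  rcases lt_or_gt_of_ne hne with hlt | hgt
  · have h1 : ENNReal.ofReal (-h x) = 0 := by
      rw [← hx, ENNReal.ofReal_of_nonpos hlt.le]
    have := ENNReal.ofReal_eq_zero.mp h1
    linarith
  · have h1 : ENNReal.ofReal (h x) = 0 := by
      rw [hx, ENNReal.ofReal_of_nonpos (by linarith)]
    have := ENNReal.ofReal_eq_zero.mp h1
    linarith

end SmoothMDAux

namespace SmoothMDAux

variable {m : ℕ} {μ : Measure (Fin m → ℝ)} [IsProbabilityMeasure μ] {h : (Fin m → ℝ) → ℝ}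

lemma integrable_kernel {d : Fin m → ℝ} (hd : ∀ k, 0 < d k) (hInt : Integrable h μ) :
    Integrable (fun z : (Fin m → ℝ) × (Fin m → ℝ) =>
      h z.1 * h z.2 * Real.exp (-∑ k, d k * (z.1 k - z.2 k) ^ 2)) (μ.prod μ) := by
  refine Integrable.mono' (hInt.norm.mul_prod hInt.norm) ?_ ?_
  · exact ((hInt.1.comp_fst).mul (hInt.1.comp_snd)).mul (Continuous.aestronglyMeasurable (by fun_prop))
  · refine Filter.Eventually.of_forall fun z => ?_
    rw [norm_mul, norm_mul]
    have he : ‖Real.exp (-∑ k, d k * (z.1 k - z.2 k) ^ 2)‖ ≤ 1 := by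
      rw [Real.norm_eq_abs, abs_of_pos (Real.exp_pos _)]
      refine Real.exp_le_one_iff.mpr ?_
      simp only [neg_nonpos]
      exact Finset.sum_nonneg fun k _ => mul_nonneg (hd k).le (sq_nonneg _)
    calc ‖h z.1‖ * ‖h z.2‖ * ‖Real.exp (-∑ k, d k * (z.1 k - z.2 k) ^ 2)‖
        ≤ ‖h z.1‖ * ‖h z.2‖ * 1 :=
          mul_le_mul_of_nonneg_left he (mul_nonneg (norm_nonneg _) (norm_nonneg _))
      _ = ‖h z.1‖ * ‖h z.2‖ := mul_one _

end SmoothMDAux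

open SmoothMDAux

/-- SmoothMD identification device: for a probability measure `μ` on `ℝ^m`, a
`μ`-integrable `h`, and strictly positive weights `d`, the double integral
`I = ∬ h(x)h(y)exp(-∑ₖ dₖ(xₖ - yₖ)²) dμ(x)dμ(y)` is well defined, nonnegative, and
vanishes iff `h = 0` `μ`-a.e. -/
theorem gaussian_double_integral_nonneg_eq_zero_iff
    (m : ℕ) (hm : 1 ≤ m) (d : Fin m → ℝ) (hd : ∀ k, 0 < d k)
    (μ : Measure (Fin m → ℝ)) [IsProbabilityMeasure μ]
    (h : (Fin m → ℝ) → ℝ) (hInt : Integrable h μ) :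
    Integrable (fun xy : (Fin m → ℝ) × (Fin m → ℝ) =>
      h xy.1 * h xy.2 * Real.exp (-∑ k, d k * (xy.1 k - xy.2 k) ^ 2)) (μ.prod μ) ∧
    0 ≤ ∫ x, ∫ y, h x * h y * Real.exp (-∑ k, d k * (x k - y k) ^ 2) ∂μ ∂μ ∧
    ((∫ x, ∫ y, h x * h y * Real.exp (-∑ k, d k * (x k - y k) ^ 2) ∂μ ∂μ) = 0 ↔
      h =ᵐ[μ] 0) := by
  have P1 := integrable_kernel hd hInt
  have hiter : (∫ x, ∫ y, h x * h y * Real.exp (-∑ k, d k * (x k - y k) ^ 2) ∂μ ∂μ) =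
      ∫ z : (Fin m → ℝ) × (Fin m → ℝ),
        h z.1 * h z.2 * Real.exp (-∑ k, d k * (z.1 k - z.2 k) ^ 2) ∂(μ.prod μ) :=
    integral_integral (f := fun x y => h x * h y * Real.exp (-∑ k, d k * (x k - y k) ^ 2)) P1
  obtain ⟨hkeyEq, hWn⟩ := key hd hInt
  have hRnonneg : 0 ≤ ∫ t : Fin m → ℝ, W d t * Complex.normSq (hhat μ h t) :=
    integral_nonneg fun t => mul_nonneg (W_pos d t).le (Complex.normSq_nonneg _)
  have hC := C_pos hd
  refine ⟨P1, ?_, ?_⟩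
  · rw [hiter]
    nlinarith [hkeyEq, hRnonneg, hC]
  constructor
  · intro hI0
    have hS0 : (∫ z : (Fin m → ℝ) × (Fin m → ℝ),
        h z.1 * h z.2 * Real.exp (-∑ k, d k * (z.1 k - z.2 k) ^ 2) ∂(μ.prod μ)) = 0 := by
      rw [← hiter]; exact hI0
    have hR0 : (∫ t : Fin m → ℝ, W d t * Complex.normSq (hhat μ h t)) = 0 := by
      rw [← hkeyEq, hS0, mul_zero]
    have hWzero := (integral_eq_zero_iff_of_nonneg
      (fun t => mul_nonneg (W_pos d t).le (Complex.normSq_nonneg _)) hWn).mp hR0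
    have hhat0 : hhat μ h =ᵐ[(volume : Measure (Fin m → ℝ))] 0 := by
      refine hWzero.mono fun t ht => ?_
      have ht' : W d t * Complex.normSq (hhat μ h t) = 0 := ht
      have : Complex.normSq (hhat μ h t) = 0 := by
        rcases mul_eq_zero.mp ht' with h0 | h0
        · exact absurd h0 (W_pos d t).ne'
        · exact h0
      simpa using Complex.normSq_eq_zero.mp this
    exact h_ae_zero hInt fun f => test_zero hInt
      (fun τ hτ u => smooth_zero hInt hhat0 hτ u) f
  · intro hae
    have houter : (fun x => ∫ y, h x * h y * Real.exp (-∑ k, d k * (x k - y k) ^ 2) ∂μ)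
        =ᵐ[μ] 0 := by
      refine hae.mono fun x hx => ?_
      have hx' : h x = 0 := hx
      simp only [Pi.zero_apply]
      have : ∀ y, h x * h y * Real.exp (-∑ k, d k * (x k - y k) ^ 2) = 0 := fun y => by
        rw [hx']; ring
      rw [integral_congr_ae (Filter.Eventually.of_forall this), integral_zero]
    rw [integral_congr_ae houter]
    simp
end
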